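/- arXiv:1803.10920 — 6 statements merged into one kernel-verified Lean document; each statement's English description precedes it below -/
import Mathlib

section
/- Let S = {(0, −3), (1, −2), (2, 0), (3, 1)} and let F(t) ∈ ℤ⟦t⟧ be the power series whose coefficient of t^n is the number of finite lists of steps from S whose x-components sum to n, all of whose prefix sums of y-components are ≥ −1, and whose total y-sum is 0. Then t¹⁸F⁴ + t¹⁴(t² − 1)F³ + 2t⁷(t² − 1)²F² + (t² − 1)⁵F + (t² − 1)⁴ = 0 in ℤ⟦t⟧. -/
set_option linter.unreachableTactic false
set_option linter.unusedTactic false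

open PowerSeries Finset


namespace Exc1

def S : Set (ℕ × ℤ) := {(0, -3), (1, -2), (2, 0), (3, 1)}
def Ok (L : List (ℕ × ℤ)) : Prop := ∀ s ∈ L, s ∈ S
def xs (L : List (ℕ × ℤ)) : ℕ := (L.map Prod.fst).sum
def ys (L : List (ℕ × ℤ)) : ℤ := (L.map Prod.snd).sum
def ps (L : List (ℕ × ℤ)) (i : ℕ) : ℤ := ((L.map Prod.snd).take i).sum
def Lb (b : ℤ) (L : List (ℕ × ℤ)) : Prop := ∀ i, b ≤ ps L i

@[simp] lemma ps_zero (L : List (ℕ × ℤ)) : ps L 0 = 0 := rfl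
@[simp] lemma ps_nil (i : ℕ) : ps [] i = 0 := by simp [ps]
lemma ps_cons (s : ℕ × ℤ) (L : List (ℕ × ℤ)) (i : ℕ) :
    ps (s :: L) (i + 1) = s.2 + ps L i := by simp [ps]
lemma ps_len (L : List (ℕ × ℤ)) {i : ℕ} (h : L.length ≤ i) : ps L i = ys L := by
  unfold ps ys
  rw [List.take_of_length_le (by simpa using h)]
lemma ps_append_le {A B : List (ℕ × ℤ)} {i : ℕ} (h : i ≤ A.length) :
    ps (A ++ B) i = ps A i := by
  unfold ps
  rw [List.map_append, List.take_append_of_le_length (by simpa using h)]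
lemma ps_append_add (A B : List (ℕ × ℤ)) (j : ℕ) :
    ps (A ++ B) (A.length + j) = ys A + ps B j := by
  unfold ps ys
  rw [List.map_append, show A.length = (A.map Prod.snd).length from by simp,
    List.take_length_add_append, List.sum_append]
lemma ys_append (A B : List (ℕ × ℤ)) : ys (A ++ B) = ys A + ys B := by simp [ys]
lemma xs_append (A B : List (ℕ × ℤ)) : xs (A ++ B) = xs A + xs B := by simp [xs]
lemma ps_take (L : List (ℕ × ℤ)) {i k : ℕ} (h : i ≤ k) : ps (L.take k) i = ps L i := by
  unfold ps
  rw [List.map_take, List.take_take, Nat.min_eq_left h]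
lemma ys_take (L : List (ℕ × ℤ)) (k : ℕ) : ys (L.take k) = ps L k := by
  unfold ps ys
  rw [List.map_take]
lemma ps_drop (L : List (ℕ × ℤ)) (k j : ℕ) :
    ps L k + ps (L.drop k) j = ps L (k + j) := by
  unfold ps
  rw [List.map_drop, ← List.sum_append, ← List.take_add]
lemma ys_eq_ps_len (L : List (ℕ × ℤ)) : ys L = ps L L.length := (ps_len L le_rfl).symm
lemma ok_append {A B : List (ℕ × ℤ)} (hA : Ok A) (hB : Ok B) : Ok (A ++ B) := by
  intro s hs
  rcases List.mem_append.1 hs with h | h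
  · exact hA s h
  · exact hB s h
lemma ok_of_append_left {A B : List (ℕ × ℤ)} (h : Ok (A ++ B)) : Ok A :=
  fun s hs => h s (List.mem_append.2 (Or.inl hs))
lemma ok_of_append_right {A B : List (ℕ × ℤ)} (h : Ok (A ++ B)) : Ok B :=
  fun s hs => h s (List.mem_append.2 (Or.inr hs))
lemma ok_take {L : List (ℕ × ℤ)} (h : Ok L) (k : ℕ) : Ok (L.take k) :=
  fun s hs => h s (List.mem_of_mem_take hs)
lemma ok_drop {L : List (ℕ × ℤ)} (h : Ok L) (k : ℕ) : Ok (L.drop k) :=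
  fun s hs => h s (List.mem_of_mem_drop hs)
lemma step_cases {s : ℕ × ℤ} (h : s ∈ S) :
    s = (0, -3) ∨ s = (1, -2) ∨ s = (2, 0) ∨ s = (3, 1) := by
  simpa [S] using h

-- new helpers
lemma lb_of_bounded {b : ℤ} {L : List (ℕ × ℤ)} (h : ∀ i ≤ L.length, b ≤ ps L i) :
    Lb b L := by
  intro i
  rcases le_or_gt i L.length with hi | hi
  · exact h i hi
  · rw [ps_len L hi.le, ys_eq_ps_len]
    exact h _ le_rfl

lemma ps_succ (L : List (ℕ × ℤ)) {k : ℕ} (h : k < L.length) :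
    ps L (k + 1) = ps L k + (L[k]'h).2 := by
  unfold ps
  have hk : k < (L.map Prod.snd).length := by simpa using h
  rw [List.take_succ, List.getElem?_eq_getElem hk, List.sum_append]
  simp

lemma split_eq (L : List (ℕ × ℤ)) {k : ℕ} (h : k < L.length) :
    L.take k ++ (L[k]'h) :: L.drop (k + 1) = L := by
  rw [← List.drop_eq_getElem_cons h, List.take_append_drop]

lemma ys_drop (L : List (ℕ × ℤ)) (k : ℕ) : ys (L.drop k) = ys L - ps L k := by
  have h := ps_drop L k L.length
  rw [ps_len L (by omega : L.length ≤ k + L.length),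
    ps_len (L.drop k) (by simp)] at h
  omega

-- glue lemmas
lemma xs_glue (A B : List (ℕ × ℤ)) (s : ℕ × ℤ) :
    xs (A ++ s :: B) = xs A + s.1 + xs B := by simp [xs]; ring
lemma ys_glue (A B : List (ℕ × ℤ)) (s : ℕ × ℤ) :
    ys (A ++ s :: B) = ys A + s.2 + ys B := by simp [ys]; ring
lemma ps_glue_le {A B : List (ℕ × ℤ)} {s : ℕ × ℤ} {i : ℕ} (h : i ≤ A.length) :
    ps (A ++ s :: B) i = ps A i := ps_append_le h
lemma ps_glue_at (A B : List (ℕ × ℤ)) (s : ℕ × ℤ) (j : ℕ) :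
    ps (A ++ s :: B) (A.length + 1 + j) = ys A + s.2 + ps B j := by
  have := ps_append_add A (s :: B) (j + 1)
  rw [ps_cons] at this
  rw [show A.length + 1 + j = A.length + (j + 1) by ring, this]
  ring

lemma lb_glue {b : ℤ} {A B : List (ℕ × ℤ)} {s : ℕ × ℤ}
    (hA : ∀ i, b ≤ ps A i) (h2 : ∀ j, b ≤ ys A + s.2 + ps B j) :
    Lb b (A ++ s :: B) := by
  intro i
  rcases le_or_gt i A.length with hi | hi
  · rw [ps_glue_le hi]; exact hA i
  · have : i = A.length + 1 + (i - A.length - 1) := by omega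
    rw [this, ps_glue_at]
    exact h2 _

def W (b e : ℤ) := {L : List (ℕ × ℤ) // Ok L ∧ Lb b L ∧ ys L = e}

-- membership facts
lemma mem03 : ((0 : ℕ), (-3 : ℤ)) ∈ S := by simp [S]
lemma mem12 : ((1 : ℕ), (-2 : ℤ)) ∈ S := by simp [S]
lemma mem20 : ((2 : ℕ), (0 : ℤ)) ∈ S := by simp [S]
lemma mem31 : ((3 : ℕ), (1 : ℤ)) ∈ S := by simp [S]

/-- uniqueness of "first passage" splittings -/
lemma split_unique {P P' Q Q' : List (ℕ × ℤ)} {s s' : ℕ × ℤ}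
    (hP : Lb 0 P) (hP' : Lb 0 P')
    (h1 : ys P + s.2 < 0) (h1' : ys P' + s'.2 < 0)
    (heq : P ++ s :: Q = P' ++ s' :: Q') : P = P' ∧ s = s' ∧ Q = Q' := by
  have key : ∀ (P₁ P₂ Q₁ Q₂ : List (ℕ × ℤ)) (t₁ t₂ : ℕ × ℤ),
      Lb 0 P₂ → ys P₁ + t₁.2 < 0 →
      P₁ ++ t₁ :: Q₁ = P₂ ++ t₂ :: Q₂ → ¬ (P₁.length < P₂.length) := by
    intro P₁ P₂ Q₁ Q₂ t₁ t₂ hP₂ h₁ he hlt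
    have e1 : ps (P₁ ++ t₁ :: Q₁) (P₁.length + 1) = ys P₁ + t₁.2 := by
      have := ps_glue_at P₁ Q₁ t₁ 0
      simpa using this
    have e2 : ps (P₂ ++ t₂ :: Q₂) (P₁.length + 1) = ps P₂ (P₁.length + 1) :=
      ps_glue_le (by omega)
    rw [he, e2] at e1
    have := hP₂ (P₁.length + 1)
    omega
  have hlen : P.length = P'.length := by
    rcases Nat.lt_trichotomy P.length P'.length with h | h | h
    · exact absurd h (key P P' Q Q' s s' hP' h1 heq)
    · exact h
    · exact absurd h (key P' P Q' Q s' s hP h1' heq.symm)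
  obtain ⟨h1, h2⟩ := List.append_inj heq hlen
  injection h2 with h3 h4
  exact ⟨h1, h3, h4⟩

/-- existence of "first passage" splittings -/
lemma fp_exists {e : ℤ} {L : List (ℕ × ℤ)} (hOk : Ok L) (hLb : Lb (-1) L)
    (hys : ys L = e) (hnot : ¬ Lb 0 L) :
    ∃ (P Q : List (ℕ × ℤ)) (s : ℕ × ℤ), L = P ++ s :: Q ∧
      Ok P ∧ Lb 0 P ∧ Ok Q ∧ Lb 0 Q ∧ ys Q = e + 1 ∧
      ((s = (1, -2) ∧ ys P = 1) ∨ (s = (0, -3) ∧ ys P = 2)) := by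
  classical
  have hex : ∃ j, j < L.length ∧ ps L (j + 1) < 0 := by
    obtain ⟨i, hi⟩ : ∃ i, ps L i < 0 := by
      by_contra hc
      push_neg at hc
      exact hnot fun i => hc i
    have hi0 : i ≠ 0 := by
      intro h; rw [h] at hi; simp at hi
    rcases le_or_gt i L.length with h | h
    · refine ⟨i - 1, by omega, ?_⟩
      rw [show i - 1 + 1 = i by omega]
      exact hi
    · have hlen0 : L.length ≠ 0 := by
        intro h0
        rw [ps_len L (by omega)] at hi
        rw [ys_eq_ps_len, h0] at hi
        simp at hi
      refine ⟨L.length - 1, by omega, ?_⟩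
      rw [show L.length - 1 + 1 = L.length by omega, ← ys_eq_ps_len]
      rw [ps_len L h.le] at hi
      exact hi
  let k := Nat.find hex
  obtain ⟨hk_len, hk_neg⟩ : k < L.length ∧ ps L (k + 1) < 0 := Nat.find_spec hex
  have hmin : ∀ i ≤ k, 0 ≤ ps L i := by
    intro i hik
    rcases Nat.eq_zero_or_pos i with h0 | h0
    · rw [h0]; simp
    · by_contra hneg
      have := Nat.find_min hex (m := i - 1) (by omega)
      push_neg at this
      have : ¬ (i - 1 < L.length ∧ ps L (i - 1 + 1) < 0) := Nat.find_min hex (by omega)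
      rw [show i - 1 + 1 = i by omega] at this
      push_neg at this
      have h2 := this (by omega)
      omega
  have hpk1 : ps L (k + 1) = -1 := le_antisymm (by omega) (hLb (k + 1))
  set s := L[k]'hk_len with hs_def
  have hsucc : ps L (k + 1) = ps L k + s.2 := ps_succ L hk_len
  have hsS : s ∈ S := hOk s (List.getElem_mem hk_len)
  have hpk : 0 ≤ ps L k := hmin k le_rfl
  have hsP : Ok (L.take k) := ok_take hOk k
  have hlenTake : (L.take k).length = k := by
    rw [List.length_take]; omega
  have hLbP : Lb 0 (L.take k) := by
    apply lb_of_bounded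
    intro i hi
    rw [hlenTake] at hi
    rw [ps_take L hi]
    exact hmin i hi
  have hysP : ys (L.take k) = ps L k := ys_take L k
  have hOkQ : Ok (L.drop (k + 1)) := ok_drop hOk (k + 1)
  have hLbQ : Lb 0 (L.drop (k + 1)) := by
    intro j
    have := ps_drop L (k + 1) j
    have := hLb (k + 1 + j)
    omega
  have hysQ : ys (L.drop (k + 1)) = e + 1 := by
    rw [ys_drop, hys, hpk1]; ring
  have hsplit : L = L.take k ++ s :: L.drop (k + 1) := (split_eq L hk_len).symm
  refine ⟨L.take k, L.drop (k + 1), s, hsplit, hsP, hLbP, hOkQ, hLbQ, hysQ, ?_⟩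
  rcases step_cases hsS with h | h | h | h
  · right
    refine ⟨h, ?_⟩
    rw [hysP]
    rw [h] at hsucc
    simp at hsucc
    omega
  · left
    refine ⟨h, ?_⟩
    rw [hysP]
    rw [h] at hsucc
    simp at hsucc
    omega
  · exfalso
    rw [h] at hsucc
    simp at hsucc
    omega
  · exfalso
    rw [h] at hsucc
    simp at hsucc
    omega

/-- uniqueness of "last visit" splittings -/
lemma lv_unique {k : ℤ} {A A' B B' : List (ℕ × ℤ)}
    (hA : ys A = k) (hA' : ys A' = k)
    (hB : Lb 0 B) (hB' : Lb 0 B')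
    (heq : A ++ ((3 : ℕ), (1 : ℤ)) :: B = A' ++ ((3 : ℕ), (1 : ℤ)) :: B') :
    A = A' ∧ B = B' := by
  have key : ∀ (A₁ A₂ B₁ B₂ : List (ℕ × ℤ)),
      ys A₁ = k → ys A₂ = k → Lb 0 B₁ →
      A₁ ++ ((3 : ℕ), (1 : ℤ)) :: B₁ = A₂ ++ ((3 : ℕ), (1 : ℤ)) :: B₂ →
      ¬ (A₁.length < A₂.length) := by
    intro A₁ A₂ B₁ B₂ h₁ h₂ hB₁ he hlt
    -- position A₂.length in LHS list: value = ys A₂ = k,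
    -- but it's at distance ≥ A₁.length+1, so equals ys A₁ + 1 + ps B₁ j ≥ k+1
    have e2 : ps (A₂ ++ ((3 : ℕ), (1 : ℤ)) :: B₂) A₂.length = ys A₂ := by
      rw [ps_glue_le le_rfl, ← ys_eq_ps_len]
    have e1 : ps (A₁ ++ ((3 : ℕ), (1 : ℤ)) :: B₁) A₂.length
        = ys A₁ + 1 + ps B₁ (A₂.length - A₁.length - 1) := by
      have := ps_glue_at A₁ B₁ ((3 : ℕ), (1 : ℤ)) (A₂.length - A₁.length - 1)
      rw [show A₁.length + 1 + (A₂.length - A₁.length - 1) = A₂.length by omega] at this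
      simpa using this
    rw [he, e2] at e1
    have := hB₁ (A₂.length - A₁.length - 1)
    omega
  have hlen : A.length = A'.length := by
    rcases Nat.lt_trichotomy A.length A'.length with h | h | h
    · exact absurd h (key A A' B B' hA hA' hB heq)
    · exact h
    · exact absurd h (key A' A B' B hA' hA hB' heq.symm)
  obtain ⟨h1, h2⟩ := List.append_inj heq hlen
  injection h2 with h3 h4
  exact ⟨h1, h4⟩

/-- existence of "last visit" splittings -/
lemma lv_exists {k : ℤ} (hk : 0 ≤ k) {L : List (ℕ × ℤ)} (hOk : Ok L)
    (hLb : Lb 0 L) (hys : ys L = k + 1) :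
    ∃ (A B : List (ℕ × ℤ)), L = A ++ ((3 : ℕ), (1 : ℤ)) :: B ∧
      Ok A ∧ Lb 0 A ∧ ys A = k ∧ Ok B ∧ Lb 0 B ∧ ys B = 0 := by
  classical
  set j0 := Nat.findGreatest (fun j => ps L j ≤ k) L.length with hj0_def
  have hspec : ps L j0 ≤ k :=
    Nat.findGreatest_spec (P := fun j => ps L j ≤ k) (m := 0) (Nat.zero_le _)
      (by simpa using hk)
  have hj0_le : j0 ≤ L.length := Nat.findGreatest_le L.length
  have hj0_lt : j0 < L.length := by
    rcases Nat.lt_or_ge j0 L.length with h | h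
    · exact h
    · exfalso
      have : j0 = L.length := by omega
      rw [this, ← ys_eq_ps_len, hys] at hspec
      omega
  have hafter : ∀ j, j0 < j → k + 1 ≤ ps L j := by
    intro j hj
    rcases le_or_gt j L.length with h | h
    · have := Nat.findGreatest_is_greatest (P := fun j => ps L j ≤ k) hj h
      omega
    · rw [ps_len L h.le, hys]
  set s := L[j0]'hj0_lt with hs_def
  have hsucc : ps L (j0 + 1) = ps L j0 + s.2 := ps_succ L hj0_lt
  have hsS : s ∈ S := hOk s (List.getElem_mem hj0_lt)
  have hnext : k + 1 ≤ ps L (j0 + 1) := hafter (j0 + 1) (by omega)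
  have hs2 : 1 ≤ s.2 := by omega
  have hs31 : s = ((3 : ℕ), (1 : ℤ)) := by
    rcases step_cases hsS with h | h | h | h <;> rw [h] at hs2 ⊢ <;> first
      | rfl
      | norm_num at hs2
  have hpj0 : ps L j0 = k := by
    rw [hs31] at hsucc
    simp at hsucc
    omega
  have hlenTake : (L.take j0).length = j0 := by
    rw [List.length_take]; omega
  refine ⟨L.take j0, L.drop (j0 + 1), ?_, ok_take hOk _, ?_, ?_, ok_drop hOk _, ?_, ?_⟩
  · rw [← hs31]
    exact (split_eq L hj0_lt).symm
  · apply lb_of_bounded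
    intro i hi
    rw [hlenTake] at hi
    rw [ps_take L hi]
    exact hLb i
  · rw [ys_take, hpj0]
  · intro j
    have h1 := ps_drop L (j0 + 1) j
    have h2 := hafter (j0 + 1 + j) (by omega)
    have h3 : ps L (j0 + 1) = k + 1 := by
      rw [hsucc, hpj0, hs31]
    omega
  · rw [ys_drop, hys]
    have h3 : ps L (j0 + 1) = k + 1 := by
      rw [hsucc, hpj0, hs31]
    rw [h3]
    ring

end Exc1

namespace Exc1

lemma ys_cons (s : ℕ × ℤ) (L : List (ℕ × ℤ)) : ys (s :: L) = s.2 + ys L := by simp [ys]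
lemma xs_cons (s : ℕ × ℤ) (L : List (ℕ × ℤ)) : xs (s :: L) = s.1 + xs L := by simp [xs]

lemma ok_glue {A B : List (ℕ × ℤ)} {s : ℕ × ℤ} (hA : Ok A) (hs : s ∈ S) (hB : Ok B) :
    Ok (A ++ s :: B) := by
  apply ok_append hA
  intro a ha
  rcases List.mem_cons.1 ha with h | h
  · rw [h]; exact hs
  · exact hB a h

lemma ok_cons {s : ℕ × ℤ} {L : List (ℕ × ℤ)} (hs : s ∈ S) (hL : Ok L) : Ok (s :: L) := by
  intro a ha
  rcases List.mem_cons.1 ha with h | h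
  · rw [h]; exact hs
  · exact hL a h

/-- last visit gluing map -/
def lvFun (k : ℤ) (hk : 0 ≤ k) : W 0 k × W 0 0 → W 0 (k + 1) := fun p =>
  ⟨p.1.1 ++ ((3 : ℕ), (1 : ℤ)) :: p.2.1, by
    obtain ⟨A, hAok, hALb, hAys⟩ := p.1
    obtain ⟨B, hBok, hBLb, hBys⟩ := p.2
    refine ⟨ok_glue hAok mem31 hBok, ?_, ?_⟩
    · apply lb_glue hALb
      intro j
      have := hBLb j
      rw [hAys]
      simp only
      omega
    · rw [ys_glue, hAys, hBys]
      simp⟩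

lemma lvFun_bij (k : ℤ) (hk : 0 ≤ k) : Function.Bijective (lvFun k hk) := by
  constructor
  · rintro ⟨⟨A, hAok, hALb, hAys⟩, ⟨B, hBok, hBLb, hBys⟩⟩
      ⟨⟨A', hAok', hALb', hAys'⟩, ⟨B', hBok', hBLb', hBys'⟩⟩ h
    have hl : A ++ ((3 : ℕ), (1 : ℤ)) :: B = A' ++ ((3 : ℕ), (1 : ℤ)) :: B' :=
      congrArg Subtype.val h
    obtain ⟨h1, h2⟩ := lv_unique hAys hAys' hBLb hBLb' hl
    subst h1; subst h2
    rfl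
  · rintro ⟨L, hOk, hLb, hys⟩
    obtain ⟨A, B, heq, hAok, hALb, hAys, hBok, hBLb, hBys⟩ := lv_exists hk hOk hLb hys
    exact ⟨(⟨A, hAok, hALb, hAys⟩, ⟨B, hBok, hBLb, hBys⟩), Subtype.ext heq.symm⟩

noncomputable def lvEquiv (k : ℤ) (hk : 0 ≤ k) : (W 0 k × W 0 0) ≃ W 0 (k + 1) :=
  Equiv.ofBijective _ (lvFun_bij k hk)

/-- the first passage equiv for `e = -1` -/
def m1Fun : (W 0 1 × W 0 0) ⊕ (W 0 2 × W 0 0) → W (-1) (-1) := fun t =>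
  match t with
  | Sum.inl p =>
      ⟨p.1.1 ++ ((1 : ℕ), (-2 : ℤ)) :: p.2.1, by
        obtain ⟨A, hAok, hALb, hAys⟩ := p.1
        obtain ⟨B, hBok, hBLb, hBys⟩ := p.2
        refine ⟨ok_glue hAok mem12 hBok, ?_, ?_⟩
        · apply lb_glue (fun i => le_trans (by norm_num) (hALb i))
          intro j
          have := hBLb j
          rw [hAys]
          simp only
          omega
        · rw [ys_glue, hAys, hBys]
          simp⟩
  | Sum.inr p =>
      ⟨p.1.1 ++ ((0 : ℕ), (-3 : ℤ)) :: p.2.1, by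
        obtain ⟨A, hAok, hALb, hAys⟩ := p.1
        obtain ⟨B, hBok, hBLb, hBys⟩ := p.2
        refine ⟨ok_glue hAok mem03 hBok, ?_, ?_⟩
        · apply lb_glue (fun i => le_trans (by norm_num) (hALb i))
          intro j
          have := hBLb j
          rw [hAys]
          simp only
          omega
        · rw [ys_glue, hAys, hBys]
          simp⟩

lemma m1Fun_bij : Function.Bijective m1Fun := by
  constructor
  · rintro (⟨⟨A, hAok, hALb, hAys⟩, ⟨B, hBok, hBLb, hBys⟩⟩ |
            ⟨⟨A, hAok, hALb, hAys⟩, ⟨B, hBok, hBLb, hBys⟩⟩)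
        (⟨⟨A', hAok', hALb', hAys'⟩, ⟨B', hBok', hBLb', hBys'⟩⟩ |
            ⟨⟨A', hAok', hALb', hAys'⟩, ⟨B', hBok', hBLb', hBys'⟩⟩) h <;>
      · have hl := congrArg Subtype.val h
        simp only [m1Fun] at hl
        obtain ⟨h1, h2, h3⟩ := split_unique hALb hALb'
          (by rw [hAys]; norm_num) (by rw [hAys']; norm_num) hl
        first
          | (subst h1; injection h2; simp_all)
          | (exfalso; exact absurd h2 (by simp))
  · rintro ⟨L, hOk, hLb, hys⟩
    have hnot : ¬ Lb 0 L := by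
      intro hc
      have := hc L.length
      rw [← ys_eq_ps_len, hys] at this
      omega
    obtain ⟨P, Q, s, heq, hPok, hPLb, hQok, hQLb, hQys, hcase⟩ :=
      fp_exists hOk hLb hys hnot
    have hQys' : ys Q = 0 := by rw [hQys]; ring
    rcases hcase with ⟨hs, hP⟩ | ⟨hs, hP⟩
    · refine ⟨Sum.inl (⟨P, hPok, hPLb, hP⟩, ⟨Q, hQok, hQLb, hQys'⟩), ?_⟩
      apply Subtype.ext
      simp only [m1Fun]
      rw [heq, hs]
    · refine ⟨Sum.inr (⟨P, hPok, hPLb, hP⟩, ⟨Q, hQok, hQLb, hQys'⟩), ?_⟩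
      apply Subtype.ext
      simp only [m1Fun]
      rw [heq, hs]

noncomputable def m1Equiv : ((W 0 1 × W 0 0) ⊕ (W 0 2 × W 0 0)) ≃ W (-1) (-1) :=
  Equiv.ofBijective _ m1Fun_bij

end Exc1

namespace Exc1

/-- first step decomposition of excursions -/
def eFun : (PUnit ⊕ (W 0 0 ⊕ W (-1) (-1))) → W 0 0 := fun t =>
  match t with
  | Sum.inl _ => ⟨[], fun s hs => absurd hs List.not_mem_nil, fun i => by simp, by simp [ys]⟩
  | Sum.inr (Sum.inl C) =>
      ⟨((2 : ℕ), (0 : ℤ)) :: C.1, by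
        obtain ⟨M, hok, hLb, hys⟩ := C
        refine ⟨ok_cons mem20 hok, ?_, ?_⟩
        · intro i
          cases i with
          | zero => simp
          | succ j => rw [ps_cons]; have := hLb j; simp only; omega
        · rw [ys_cons, hys]; simp⟩
  | Sum.inr (Sum.inr M) =>
      ⟨((3 : ℕ), (1 : ℤ)) :: M.1, by
        obtain ⟨N, hok, hLb, hys⟩ := M
        refine ⟨ok_cons mem31 hok, ?_, ?_⟩
        · intro i
          cases i with
          | zero => simp
          | succ j => rw [ps_cons]; have := hLb j; simp only; omega
        · rw [ys_cons, hys]; simp⟩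

lemma eFun_bij : Function.Bijective eFun := by
  constructor
  · rintro (⟨⟩ | (⟨C, hC⟩ | ⟨M, hM⟩)) (⟨⟩ | (⟨C', hC'⟩ | ⟨M', hM'⟩)) h <;>
      · have hl := congrArg Subtype.val h
        simp only [eFun] at hl
        first
          | rfl
          | simp_all
  · rintro ⟨L, hOk, hLb, hys⟩
    match L with
    | [] => exact ⟨Sum.inl PUnit.unit, Subtype.ext rfl⟩
    | s :: M =>
      have hs := step_cases (hOk s (List.mem_cons_self))
      have hps1 : 0 ≤ s.2 := by
        have := hLb 1
        rw [show (1 : ℕ) = 0 + 1 from rfl, ps_cons] at this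
        simpa using this
      have hMok : Ok M := fun a ha => hOk a (List.mem_cons_of_mem s ha)
      rcases hs with h | h | h | h
      · exfalso; rw [h] at hps1; norm_num at hps1
      · exfalso; rw [h] at hps1; norm_num at hps1
      · refine ⟨Sum.inr (Sum.inl ⟨M, hMok, ?_, ?_⟩), ?_⟩
        · intro i
          have := hLb (i + 1)
          rw [ps_cons, h] at this
          simpa using this
        · have := ys_cons s M
          rw [hys, h] at this
          simpa using this.symm
        · apply Subtype.ext
          simp only [eFun]
          rw [h]
      · refine ⟨Sum.inr (Sum.inr ⟨M, hMok, ?_, ?_⟩), ?_⟩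
        · intro i
          have := hLb (i + 1)
          rw [ps_cons, h] at this
          simp only at this
          omega
        · have := ys_cons s M
          rw [hys, h] at this
          simp only at this
          omega
        · apply Subtype.ext
          simp only [eFun]
          rw [h]

noncomputable def eEquiv : (PUnit ⊕ (W 0 0 ⊕ W (-1) (-1))) ≃ W 0 0 :=
  Equiv.ofBijective _ eFun_bij

/-- decomposition of paths bounded below by -1 ending at 0 -/
def fFun : (W 0 0 ⊕ ((W 0 1 × W 0 1) ⊕ (W 0 2 × W 0 1))) → W (-1) 0 := fun t =>
  match t with
  | Sum.inl C => ⟨C.1, C.2.1, fun i => le_trans (by norm_num) (C.2.2.1 i), C.2.2.2⟩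
  | Sum.inr (Sum.inl p) =>
      ⟨p.1.1 ++ ((1 : ℕ), (-2 : ℤ)) :: p.2.1, by
        obtain ⟨A, hAok, hALb, hAys⟩ := p.1
        obtain ⟨B, hBok, hBLb, hBys⟩ := p.2
        refine ⟨ok_glue hAok mem12 hBok, ?_, ?_⟩
        · apply lb_glue (fun i => le_trans (by norm_num) (hALb i))
          intro j
          have := hBLb j
          rw [hAys]
          simp only
          omega
        · rw [ys_glue, hAys, hBys]
          simp⟩
  | Sum.inr (Sum.inr p) =>
      ⟨p.1.1 ++ ((0 : ℕ), (-3 : ℤ)) :: p.2.1, by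
        obtain ⟨A, hAok, hALb, hAys⟩ := p.1
        obtain ⟨B, hBok, hBLb, hBys⟩ := p.2
        refine ⟨ok_glue hAok mem03 hBok, ?_, ?_⟩
        · apply lb_glue (fun i => le_trans (by norm_num) (hALb i))
          intro j
          have := hBLb j
          rw [hAys]
          simp only
          omega
        · rw [ys_glue, hAys, hBys]
          simp⟩

lemma fFun_notLb {A B : List (ℕ × ℤ)} {s : ℕ × ℤ} (hys : ys A + s.2 < 0) :
    ¬ Lb 0 (A ++ s :: B) := by
  intro hc
  have := hc (A.length + 1)
  have h2 := ps_glue_at A B s 0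
  simp only [ps_zero, add_zero, Nat.add_zero] at h2
  rw [show A.length + 1 + 0 = A.length + 1 by ring] at h2
  omega

lemma fFun_bij : Function.Bijective fFun := by
  constructor
  · rintro (⟨C, hCok, hCLb, hCys⟩ |
        (⟨⟨A, hAok, hALb, hAys⟩, ⟨B, hBok, hBLb, hBys⟩⟩ |
         ⟨⟨A, hAok, hALb, hAys⟩, ⟨B, hBok, hBLb, hBys⟩⟩))
      (⟨C', hCok', hCLb', hCys'⟩ |
        (⟨⟨A', hAok', hALb', hAys'⟩, ⟨B', hBok', hBLb', hBys'⟩⟩ |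
         ⟨⟨A', hAok', hALb', hAys'⟩, ⟨B', hBok', hBLb', hBys'⟩⟩)) h <;>
      have hl := congrArg Subtype.val h <;>
      simp only [fFun] at hl
    · simp_all
    · exfalso
      rw [hl] at hCLb
      exact fFun_notLb (by rw [hAys']; norm_num) hCLb
    · exfalso
      rw [hl] at hCLb
      exact fFun_notLb (by rw [hAys']; norm_num) hCLb
    · exfalso
      rw [← hl] at hCLb'
      exact fFun_notLb (by rw [hAys]; norm_num) hCLb'
    · obtain ⟨h1, h2, h3⟩ := split_unique hALb hALb'
        (by rw [hAys]; norm_num) (by rw [hAys']; norm_num) hl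
      subst h1; subst h3; simp_all
    · obtain ⟨h1, h2, h3⟩ := split_unique hALb hALb'
        (by rw [hAys]; norm_num) (by rw [hAys']; norm_num) hl
      exact absurd h2 (by simp)
    · exfalso
      rw [← hl] at hCLb'
      exact fFun_notLb (by rw [hAys]; norm_num) hCLb'
    · obtain ⟨h1, h2, h3⟩ := split_unique hALb hALb'
        (by rw [hAys]; norm_num) (by rw [hAys']; norm_num) hl
      exact absurd h2 (by simp)
    · obtain ⟨h1, h2, h3⟩ := split_unique hALb hALb'
        (by rw [hAys]; norm_num) (by rw [hAys']; norm_num) hl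
      subst h1; subst h3; simp_all
  · rintro ⟨L, hOk, hLb, hys⟩
    by_cases hLb0 : Lb 0 L
    · exact ⟨Sum.inl ⟨L, hOk, hLb0, hys⟩, Subtype.ext rfl⟩
    · obtain ⟨P, Q, s, heq, hPok, hPLb, hQok, hQLb, hQys, hcase⟩ :=
        fp_exists hOk hLb hys hLb0
      have hQys' : ys Q = 1 := by rw [hQys]; ring
      rcases hcase with ⟨hs, hP⟩ | ⟨hs, hP⟩
      · refine ⟨Sum.inr (Sum.inl (⟨P, hPok, hPLb, hP⟩, ⟨Q, hQok, hQLb, hQys'⟩)), ?_⟩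
        apply Subtype.ext
        simp only [fFun]
        rw [heq, hs]
      · refine ⟨Sum.inr (Sum.inr (⟨P, hPok, hPLb, hP⟩, ⟨Q, hQok, hQLb, hQys'⟩)), ?_⟩
        apply Subtype.ext
        simp only [fFun]
        rw [heq, hs]

noncomputable def fEquiv : (W 0 0 ⊕ ((W 0 1 × W 0 1) ⊕ (W 0 2 × W 0 1))) ≃ W (-1) 0 :=
  Equiv.ofBijective _ fFun_bij

end Exc1

namespace Exc1

-- length bound
lemma length_bound {L : List (ℕ × ℤ)} (h : Ok L) :
    6 * (L.length : ℤ) ≤ 3 * (xs L : ℤ) - 2 * ys L := by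
  induction L with
  | nil => simp [xs, ys]
  | cons s L ih =>
      have hs := step_cases (h s (List.mem_cons_self))
      have hL : Ok L := fun a ha => h a (List.mem_cons_of_mem s ha)
      have := ih hL
      have hxs : xs (s :: L) = s.1 + xs L := by simp [xs]
      have hys : ys (s :: L) = s.2 + ys L := by simp [ys]
      have hstep : (6 : ℤ) ≤ 3 * (s.1 : ℤ) - 2 * s.2 := by
        rcases hs with h | h | h | h <;> subst h <;> norm_num
      rw [hxs, hys, List.length_cons]
      push_cast
      push_cast at this
      linarith

lemma finite_ok_len (m : ℕ) : {L : List (ℕ × ℤ) | Ok L ∧ L.length ≤ m}.Finite := by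
  induction m with
  | zero =>
      apply Set.Finite.subset (Set.finite_singleton ([] : List (ℕ × ℤ)))
      rintro L ⟨-, hL⟩
      simp_all [List.length_eq_zero_iff]
  | succ m ih =>
      have hS : S.Finite := by
        unfold S
        exact (Set.finite_singleton _).insert _ |>.insert _ |>.insert _
      apply Set.Finite.subset
        (Set.Finite.insert [] (((hS.prod ih).image fun p => p.1 :: p.2)))
      rintro L ⟨hok, hlen⟩
      rcases L with _ | ⟨s, M⟩
      · simp
      · right
        refine ⟨(s, M), ⟨hok s (List.mem_cons_self), fun a ha => hok a (List.mem_cons_of_mem _ ha), by simpa using hlen⟩, rfl⟩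

instance finW (b e : ℤ) (n : ℕ) : Finite {x : W b e // xs x.1 = n} := by
  have hfin := (finite_ok_len (n + e.natAbs + 1)).to_subtype
  apply Finite.of_injective
    (fun x => (⟨x.1.1, x.1.2.1, by
      have hb := length_bound x.1.2.1
      have hys : ys x.1.1 = e := x.1.2.2.2
      have hxs : xs x.1.1 = n := x.2
      have habs : ((e.natAbs : ℤ)) = |e| := Int.natCast_natAbs e
      have hneg : -e ≤ |e| := neg_le_abs e
      have : (x.1.1.length : ℤ) ≤ n + e.natAbs + 1 := by
        rw [hys, hxs] at hb
        linarith
      exact_mod_cast this⟩ : {L : List (ℕ × ℤ) | Ok L ∧ L.length ≤ n + e.natAbs + 1}))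
  rintro ⟨⟨L, hL⟩, hn⟩ ⟨⟨M, hM⟩, hm⟩ h
  simp only [Set.mem_setOf_eq, Subtype.mk.injEq] at h
  subst h
  rfl

noncomputable def ct (b e : ℤ) (n : ℕ) : ℕ := Nat.card {x : W b e // xs x.1 = n}

noncomputable def gf (b e : ℤ) : PowerSeries ℤ := PowerSeries.mk fun n => (ct b e n : ℤ)

noncomputable def ser {α : Type*} (w : α → ℕ) : PowerSeries ℤ :=
  PowerSeries.mk fun n => (Nat.card {x : α // w x = n} : ℤ)

lemma ser_congr {α β : Type*} (wa : α → ℕ) (wb : β → ℕ) (e : α ≃ β)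
    (h : ∀ x, wb (e x) = wa x) : ser wa = ser wb := by
  ext n
  rw [ser, ser, coeff_mk, coeff_mk]
  have : Nat.card {x : α // wa x = n} = Nat.card {y : β // wb y = n} :=
    Nat.card_congr (e.subtypeEquiv (fun x => by rw [h x]))
  rw [this]

section prodsec
variable {α β : Type*} (wa : α → ℕ) (wb : β → ℕ)
  [ha : ∀ n, Finite {x : α // wa x = n}] [hb : ∀ n, Finite {y : β // wb y = n}]

def prodFiberEquiv (m : ℕ) : {p : α × β // wa p.1 + wb p.2 = m}
    ≃ Σ ij : (antidiagonal m : Finset (ℕ × ℕ)),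
        {x : α // wa x = ij.1.1} × {y : β // wb y = ij.1.2} :=
  { toFun := fun p => ⟨⟨(wa p.1.1, wb p.1.2), mem_antidiagonal.2 p.2⟩,
      ⟨⟨p.1.1, rfl⟩, ⟨p.1.2, rfl⟩⟩⟩
    invFun := fun q => ⟨(q.2.1.1, q.2.2.1), by
      have := mem_antidiagonal.1 q.1.2
      rw [q.2.1.2, q.2.2.2]; exact this⟩
    left_inv := fun p => rfl
    right_inv := fun q => by
      rcases q with ⟨⟨⟨i, j⟩, hij⟩, ⟨⟨x, hx⟩, ⟨y, hy⟩⟩⟩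
      dsimp only at hx hy
      subst hx; subst hy; rfl }

lemma prodFiberFinite (m : ℕ) : Finite {p : α × β // wa p.1 + wb p.2 = m} :=
  Finite.of_equiv _ (prodFiberEquiv wa wb m).symm

lemma ser_prod : ser (fun p : α × β => wa p.1 + wb p.2) = ser wa * ser wb := by
  classical
  ext n
  simp only [ser, coeff_mul, coeff_mk]
  rw [Nat.card_congr (prodFiberEquiv wa wb n)]
  haveI : ∀ ij : (antidiagonal n : Finset (ℕ × ℕ)),
      Fintype ({x : α // wa x = ij.1.1} × {y : β // wb y = ij.1.2}) :=
    fun ij => Fintype.ofFinite _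
  calc ((Nat.card (Σ ij : (antidiagonal n : Finset (ℕ × ℕ)),
        {x : α // wa x = ij.1.1} × {y : β // wb y = ij.1.2}) : ℤ))
      = ∑ ij : (antidiagonal n : Finset (ℕ × ℕ)),
          ((Nat.card {x : α // wa x = ij.1.1} : ℤ) * (Nat.card {y : β // wb y = ij.1.2} : ℤ)) := by
        rw [Nat.card_eq_fintype_card, Fintype.card_sigma]
        push_cast
        apply Finset.sum_congr rfl
        intro ij _
        rw [← Nat.card_eq_fintype_card, Nat.card_prod]
        push_cast
        rfl
    _ = ∑ ij ∈ antidiagonal n,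
          ((Nat.card {x : α // wa x = ij.1} : ℤ) * (Nat.card {y : β // wb y = ij.2} : ℤ)) :=
        Finset.sum_coe_sort (antidiagonal n)
          (fun ij => ((Nat.card {x : α // wa x = ij.1} : ℤ) * (Nat.card {y : β // wb y = ij.2} : ℤ)))
end prodsec

lemma ser_sum {α β : Type*} (wa : α → ℕ) (wb : β → ℕ)
    [ha : ∀ n, Finite {x : α // wa x = n}] [hb : ∀ n, Finite {y : β // wb y = n}] :
    ser (Sum.elim wa wb) = ser wa + ser wb := by
  ext n
  rw [ser, coeff_mk, map_add, ser, ser, coeff_mk, coeff_mk]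
  have e : {x : α ⊕ β // Sum.elim wa wb x = n}
      ≃ {x : α // wa x = n} ⊕ {y : β // wb y = n} :=
    { toFun := fun p => match p with
        | ⟨Sum.inl a, h⟩ => Sum.inl ⟨a, h⟩
        | ⟨Sum.inr b, h⟩ => Sum.inr ⟨b, h⟩
      invFun := fun q => match q with
        | Sum.inl ⟨a, h⟩ => ⟨Sum.inl a, h⟩
        | Sum.inr ⟨b, h⟩ => ⟨Sum.inr b, h⟩
      left_inv := fun p => by rcases p with ⟨a | b, h⟩ <;> rfl
      right_inv := fun q => by rcases q with ⟨a, h⟩ | ⟨b, h⟩ <;> rfl }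
  rw [Nat.card_congr e, Nat.card_sum]
  push_cast
  ring

lemma sumFiberFinite {α β : Type*} (wa : α → ℕ) (wb : β → ℕ)
    [ha : ∀ n, Finite {x : α // wa x = n}] [hb : ∀ n, Finite {y : β // wb y = n}]
    (n : ℕ) : Finite {x : α ⊕ β // Sum.elim wa wb x = n} := by
  have e : {x : α ⊕ β // Sum.elim wa wb x = n}
      ≃ {x : α // wa x = n} ⊕ {y : β // wb y = n} :=
    { toFun := fun p => match p with
        | ⟨Sum.inl a, h⟩ => Sum.inl ⟨a, h⟩
        | ⟨Sum.inr b, h⟩ => Sum.inr ⟨b, h⟩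
      invFun := fun q => match q with
        | Sum.inl ⟨a, h⟩ => ⟨Sum.inl a, h⟩
        | Sum.inr ⟨b, h⟩ => ⟨Sum.inr b, h⟩
      left_inv := fun p => by rcases p with ⟨a | b, h⟩ <;> rfl
      right_inv := fun q => by rcases q with ⟨a, h⟩ | ⟨b, h⟩ <;> rfl }
  exact Finite.of_equiv _ e.symm

lemma ser_shift {α : Type*} (w : α → ℕ) (k : ℕ) :
    ser (fun x => w x + k) = X ^ k * ser w := by
  ext n
  rw [ser, coeff_mk, coeff_X_pow_mul', ser]
  split_ifs with h
  · rw [coeff_mk]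
    congr 1
    apply Nat.card_congr
    apply Equiv.subtypeEquivRight
    intro x
    omega
  · have : {x : α // w x + k = n} ≃ (∅ : Set α) := by
      apply Equiv.subtypeEquiv (Equiv.refl α)
      intro x
      simp only [Equiv.refl_apply, Set.mem_empty_iff_false, iff_false]
      omega
    rw [Nat.card_congr this]
    simp

lemma ser_unit : ser (fun _ : PUnit => 0) = 1 := by
  ext n
  rw [ser, coeff_mk, coeff_one]
  split_ifs with h
  · subst h
    rw [Nat.card_congr (Equiv.subtypeUnivEquiv (fun _ => rfl))]
    simp
  · have : {x : PUnit // (0:ℕ) = n} ≃ (∅ : Set PUnit) := by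
      apply Equiv.subtypeEquiv (Equiv.refl _)
      intro x
      simp only [Equiv.refl_apply, Set.mem_empty_iff_false, iff_false]
      omega
    rw [Nat.card_congr this]
    simp

end Exc1
namespace Exc1

lemma finShift {α : Type*} (w : α → ℕ) (k n : ℕ) [h : ∀ m, Finite {x : α // w x = m}] :
    Finite {x : α // w x + k = n} := by
  apply Finite.of_injective (fun x => (⟨x.1, by have := x.2; omega⟩ : {y : α // w y = n - k}))
  rintro ⟨x, hx⟩ ⟨y, hy⟩ h
  simpa using congrArg Subtype.val h

lemma gf_def (b e : ℤ) : gf b e = ser (fun x : W b e => xs x.1) := rfl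

lemma gf_succ (k : ℤ) (hk : 0 ≤ k) : gf 0 (k + 1) = X ^ 3 * (gf 0 k * gf 0 0) := by
  have h1 : ser (fun p : W 0 k × W 0 0 => (xs p.1.1 + xs p.2.1) + 3)
      = ser (fun x : W 0 (k + 1) => xs x.1) :=
    ser_congr _ _ (lvEquiv k hk) (fun p => by
      show xs (p.1.1 ++ ((3 : ℕ), (1 : ℤ)) :: p.2.1) = _
      rw [xs_glue]
      simp
      try omega)
  have h2 : ser (fun p : W 0 k × W 0 0 => (xs p.1.1 + xs p.2.1) + 3)
      = X ^ 3 * ser (fun p : W 0 k × W 0 0 => xs p.1.1 + xs p.2.1) :=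
    ser_shift _ 3
  have h3 : ser (fun p : W 0 k × W 0 0 => xs p.1.1 + xs p.2.1)
      = ser (fun x : W 0 k => xs x.1) * ser (fun y : W 0 0 => xs y.1) :=
    ser_prod (fun x : W 0 k => xs x.1) (fun y : W 0 0 => xs y.1)
  have h := (gf_def 0 (k + 1)).trans h1.symm
  rw [h2, h3, ← gf_def 0 k, ← gf_def 0 0] at h
  exact h

lemma gf01 : gf 0 1 = X ^ 3 * (gf 0 0 * gf 0 0) := by
  have h := gf_succ 0 le_rfl
  rwa [show ((0 : ℤ) + 1 : ℤ) = 1 by norm_num] at h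

lemma gf02 : gf 0 2 = X ^ 3 * (gf 0 1 * gf 0 0) := by
  have h := gf_succ 1 (by norm_num)
  rwa [show ((1 : ℤ) + 1 : ℤ) = 2 by norm_num] at h

lemma gfM1 : gf (-1) (-1) = X * (gf 0 1 * gf 0 0) + gf 0 2 * gf 0 0 := by
  haveI i1 : ∀ m, Finite {p : W 0 1 × W 0 0 // xs p.1.1 + xs p.2.1 = m} :=
    fun m => prodFiberFinite (fun x : W 0 1 => xs x.1) (fun y : W 0 0 => xs y.1) (ha := fun n => finW 0 1 n) (hb := fun n => finW 0 0 n) m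
  haveI i2 : ∀ m, Finite {p : W 0 1 × W 0 0 // (xs p.1.1 + xs p.2.1) + 1 = m} :=
    fun m => finShift _ 1 m (h := i1)
  haveI i3 : ∀ m, Finite {p : W 0 2 × W 0 0 // xs p.1.1 + xs p.2.1 = m} :=
    fun m => prodFiberFinite (fun x : W 0 2 => xs x.1) (fun y : W 0 0 => xs y.1) (ha := fun n => finW 0 2 n) (hb := fun n => finW 0 0 n) m
  have h1 : ser (Sum.elim (fun p : W 0 1 × W 0 0 => (xs p.1.1 + xs p.2.1) + 1)
        (fun p : W 0 2 × W 0 0 => xs p.1.1 + xs p.2.1))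
      = ser (fun x : W (-1) (-1) => xs x.1) :=
    ser_congr _ _ m1Equiv (fun t => by
      rcases t with p | p <;>
        · show xs (p.1.1 ++ _ :: p.2.1) = _
          rw [xs_glue]
          simp
          try omega)
  have h2 := ser_sum (fun p : W 0 1 × W 0 0 => (xs p.1.1 + xs p.2.1) + 1)
    (fun p : W 0 2 × W 0 0 => xs p.1.1 + xs p.2.1) (ha := i2) (hb := i3)
  have h3 : ser (fun p : W 0 1 × W 0 0 => (xs p.1.1 + xs p.2.1) + 1)
      = X ^ 1 * ser (fun p : W 0 1 × W 0 0 => xs p.1.1 + xs p.2.1) := ser_shift _ 1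
  have h4 : ser (fun p : W 0 1 × W 0 0 => xs p.1.1 + xs p.2.1)
      = ser (fun x : W 0 1 => xs x.1) * ser (fun y : W 0 0 => xs y.1) :=
    ser_prod (fun x : W 0 1 => xs x.1) (fun y : W 0 0 => xs y.1)
  have h5 : ser (fun p : W 0 2 × W 0 0 => xs p.1.1 + xs p.2.1)
      = ser (fun x : W 0 2 => xs x.1) * ser (fun y : W 0 0 => xs y.1) :=
    ser_prod (fun x : W 0 2 => xs x.1) (fun y : W 0 0 => xs y.1)
  have h := (gf_def (-1) (-1)).trans h1.symm
  rw [h2, h3, h4, h5, ← gf_def 0 1, ← gf_def 0 0, ← gf_def 0 2] at h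
  exact h.trans (by ring)

lemma gfE : gf 0 0 = 1 + X ^ 2 * gf 0 0 + X ^ 3 * gf (-1) (-1) := by
  haveI i2 : ∀ m, Finite {x : W 0 0 // xs x.1 + 2 = m} :=
    fun m => finShift (fun x : W 0 0 => xs x.1) 2 m (h := fun n => finW 0 0 n)
  haveI i3 : ∀ m, Finite {x : W (-1) (-1) // xs x.1 + 3 = m} :=
    fun m => finShift (fun x : W (-1) (-1) => xs x.1) 3 m (h := fun n => finW (-1) (-1) n)
  haveI i4 : ∀ m, Finite {x : W 0 0 ⊕ W (-1) (-1) //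
      Sum.elim (fun C : W 0 0 => xs C.1 + 2) (fun M : W (-1) (-1) => xs M.1 + 3) x = m} :=
    fun m => sumFiberFinite (fun C : W 0 0 => xs C.1 + 2)
      (fun M : W (-1) (-1) => xs M.1 + 3) (ha := i2) (hb := i3) m
  have h1 : ser (Sum.elim (fun _ : PUnit.{1} => 0)
        (Sum.elim (fun C : W 0 0 => xs C.1 + 2) (fun M : W (-1) (-1) => xs M.1 + 3)))
      = ser (fun x : W 0 0 => xs x.1) :=
    ser_congr _ _ eEquiv (fun t => by
      rcases t with _ | (C | M)
      · show xs ([] : List (ℕ × ℤ)) = 0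
        rfl
      · show xs (((2 : ℕ), (0 : ℤ)) :: C.1) = xs C.1 + 2
        rw [xs_cons]
        omega
      · show xs (((3 : ℕ), (1 : ℤ)) :: M.1) = xs M.1 + 3
        rw [xs_cons]
        omega)
  have h2 := ser_sum (fun _ : PUnit.{1} => (0 : ℕ))
    (Sum.elim (fun C : W 0 0 => xs C.1 + 2) (fun M : W (-1) (-1) => xs M.1 + 3))
    (hb := i4)
  have h3 := ser_sum (fun C : W 0 0 => xs C.1 + 2) (fun M : W (-1) (-1) => xs M.1 + 3)
    (ha := i2) (hb := i3)
  have h4 : ser (fun C : W 0 0 => xs C.1 + 2) = X ^ 2 * ser (fun x : W 0 0 => xs x.1) :=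
    ser_shift _ 2
  have h5 : ser (fun M : W (-1) (-1) => xs M.1 + 3)
      = X ^ 3 * ser (fun x : W (-1) (-1) => xs x.1) := ser_shift _ 3
  have h := (gf_def 0 0).trans h1.symm
  rw [h2, h3, h4, h5, ser_unit, ← gf_def 0 0, ← gf_def (-1) (-1)] at h
  exact h.trans (by ring)

lemma gfF : gf (-1) 0 = gf 0 0 + (X * (gf 0 1 * gf 0 1) + gf 0 2 * gf 0 1) := by
  haveI i1 : ∀ m, Finite {p : W 0 1 × W 0 1 // xs p.1.1 + xs p.2.1 = m} :=
    fun m => prodFiberFinite (fun x : W 0 1 => xs x.1) (fun y : W 0 1 => xs y.1) (ha := fun n => finW 0 1 n) (hb := fun n => finW 0 1 n) m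
  haveI i2 : ∀ m, Finite {p : W 0 1 × W 0 1 // (xs p.1.1 + xs p.2.1) + 1 = m} :=
    fun m => finShift _ 1 m (h := i1)
  haveI i3 : ∀ m, Finite {p : W 0 2 × W 0 1 // xs p.1.1 + xs p.2.1 = m} :=
    fun m => prodFiberFinite (fun x : W 0 2 => xs x.1) (fun y : W 0 1 => xs y.1) (ha := fun n => finW 0 2 n) (hb := fun n => finW 0 1 n) m
  haveI i4 : ∀ m, Finite {x : (W 0 1 × W 0 1) ⊕ (W 0 2 × W 0 1) //
      Sum.elim (fun p : W 0 1 × W 0 1 => (xs p.1.1 + xs p.2.1) + 1)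
        (fun p : W 0 2 × W 0 1 => xs p.1.1 + xs p.2.1) x = m} :=
    fun m => sumFiberFinite (fun p : W 0 1 × W 0 1 => (xs p.1.1 + xs p.2.1) + 1)
      (fun p : W 0 2 × W 0 1 => xs p.1.1 + xs p.2.1) (ha := i2) (hb := i3) m
  have h1 : ser (Sum.elim (fun C : W 0 0 => xs C.1)
        (Sum.elim (fun p : W 0 1 × W 0 1 => (xs p.1.1 + xs p.2.1) + 1)
          (fun p : W 0 2 × W 0 1 => xs p.1.1 + xs p.2.1)))
      = ser (fun x : W (-1) 0 => xs x.1) :=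
    ser_congr _ _ fEquiv (fun t => by
      rcases t with C | (p | p)
      · rfl
      · show xs (p.1.1 ++ _ :: p.2.1) = _
        rw [xs_glue]
        simp
        try omega
      · show xs (p.1.1 ++ _ :: p.2.1) = _
        rw [xs_glue]
        simp
        try omega)
  have h2 := ser_sum (fun C : W 0 0 => xs C.1)
    (Sum.elim (fun p : W 0 1 × W 0 1 => (xs p.1.1 + xs p.2.1) + 1)
      (fun p : W 0 2 × W 0 1 => xs p.1.1 + xs p.2.1)) (hb := i4)
  have h3 := ser_sum (fun p : W 0 1 × W 0 1 => (xs p.1.1 + xs p.2.1) + 1)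
    (fun p : W 0 2 × W 0 1 => xs p.1.1 + xs p.2.1) (ha := i2) (hb := i3)
  have h4 : ser (fun p : W 0 1 × W 0 1 => (xs p.1.1 + xs p.2.1) + 1)
      = X ^ 1 * ser (fun p : W 0 1 × W 0 1 => xs p.1.1 + xs p.2.1) := ser_shift _ 1
  have h5 : ser (fun p : W 0 1 × W 0 1 => xs p.1.1 + xs p.2.1)
      = ser (fun x : W 0 1 => xs x.1) * ser (fun y : W 0 1 => xs y.1) :=
    ser_prod (fun x : W 0 1 => xs x.1) (fun y : W 0 1 => xs y.1)
  have h6 : ser (fun p : W 0 2 × W 0 1 => xs p.1.1 + xs p.2.1)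
      = ser (fun x : W 0 2 => xs x.1) * ser (fun y : W 0 1 => xs y.1) :=
    ser_prod (fun x : W 0 2 => xs x.1) (fun y : W 0 1 => xs y.1)
  have h := (gf_def (-1) 0).trans h1.symm
  rw [h2, h3, h4, h5, h6, ← gf_def 0 0, ← gf_def 0 1, ← gf_def 0 2] at h
  exact h.trans (by ring)

end Exc1

namespace Exc1

lemma hM1' : gf (-1) (-1) = X ^ 4 * gf 0 0 ^ 3 + X ^ 6 * gf 0 0 ^ 4 := by
  rw [gfM1, gf02, gf01]; ring

lemma hE' : gf 0 0 = 1 + X ^ 2 * gf 0 0 + X ^ 7 * gf 0 0 ^ 3 + X ^ 9 * gf 0 0 ^ 4 := by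
  linear_combination gfE + X ^ 3 * hM1'

lemma hF' : gf (-1) 0 = gf 0 0 + X ^ 7 * gf 0 0 ^ 4 + X ^ 9 * gf 0 0 ^ 5 := by
  rw [gfF, gf02, gf01]; ring

end Exc1

/-- Generating function for excursions bounded below by `-1` with step set
`S = {(0, -3), (1, -2), (2, 0), (3, 1)}`: the coefficient of `t^n` counts lists
of steps from `S` whose `x`-components sum to `n`, whose prefix `y`-sums are all
`≥ -1`, and whose total `y`-sum is `0`. -/
noncomputable def exc1GF : PowerSeries ℤ :=
  PowerSeries.mk fun n =>
    (Nat.card {L : List (ℕ × ℤ) //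
      (∀ s ∈ L, s ∈ ({(0, -3), (1, -2), (2, 0), (3, 1)} : Set (ℕ × ℤ))) ∧
      (L.map Prod.fst).sum = n ∧
      (∀ i : ℕ, -1 ≤ ((L.map Prod.snd).take i).sum) ∧
      (L.map Prod.snd).sum = 0} : ℤ)

lemma exc1GF_eq : exc1GF = Exc1.gf (-1) 0 := by
  ext n
  simp only [exc1GF, Exc1.gf, Exc1.ct, PowerSeries.coeff_mk]
  have h : Nat.card {L : List (ℕ × ℤ) //
      (∀ s ∈ L, s ∈ ({(0, -3), (1, -2), (2, 0), (3, 1)} : Set (ℕ × ℤ))) ∧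
      (L.map Prod.fst).sum = n ∧
      (∀ i : ℕ, -1 ≤ ((L.map Prod.snd).take i).sum) ∧
      (L.map Prod.snd).sum = 0}
      = Nat.card {x : Exc1.W (-1) 0 // Exc1.xs x.1 = n} := by
    apply Nat.card_congr
    exact
      { toFun := fun L => ⟨⟨L.1, L.2.1, L.2.2.2.1, L.2.2.2.2⟩, L.2.2.1⟩
        invFun := fun x => ⟨x.1.1, x.1.2.1, x.2, x.1.2.2.1, x.1.2.2.2⟩
        left_inv := fun L => rfl
        right_inv := fun x => rfl }
  rw [h]

theorem exc1_minimalPolynomial :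
    X ^ 18 * exc1GF ^ 4 + X ^ 14 * (X ^ 2 - 1) * exc1GF ^ 3
      + 2 * X ^ 7 * (X ^ 2 - 1) ^ 2 * exc1GF ^ 2
      + (X ^ 2 - 1) ^ 5 * exc1GF + (X ^ 2 - 1) ^ 4 = 0 := by
  rw [exc1GF_eq, Exc1.hF']
  set Ee := Exc1.gf 0 0 with hEe
  linear_combination
    ((-1) * 1
      + (4 : PowerSeries ℤ) * X ^ 2
      + (-6 : PowerSeries ℤ) * X ^ 4
      + (4 : PowerSeries ℤ) * X ^ 6
      + (-2 : PowerSeries ℤ) * X ^ 7 * Ee ^ 2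
      + (-1 : PowerSeries ℤ) * X ^ 7 * Ee ^ 3
      + (-1 : PowerSeries ℤ) * X ^ 8
      + (4 : PowerSeries ℤ) * X ^ 9 * Ee ^ 2
      + (2 : PowerSeries ℤ) * X ^ 9 * Ee ^ 3
      + (-1 : PowerSeries ℤ) * X ^ 9 * Ee ^ 4
      + (-2 : PowerSeries ℤ) * X ^ 11 * Ee ^ 2
      + (4 : PowerSeries ℤ) * X ^ 11 * Ee ^ 4
      + (-2 : PowerSeries ℤ) * X ^ 13 * Ee ^ 3
      + (-6 : PowerSeries ℤ) * X ^ 13 * Ee ^ 4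
      + X ^ 14 * Ee ^ 3
      + X ^ 14 * Ee ^ 4
      + (-1 : PowerSeries ℤ) * X ^ 14 * Ee ^ 5
      + X ^ 15 * Ee ^ 3
      + (4 : PowerSeries ℤ) * X ^ 15 * Ee ^ 4
      + (-1 : PowerSeries ℤ) * X ^ 16 * Ee ^ 3
      + (-2 : PowerSeries ℤ) * X ^ 16 * Ee ^ 4
      + X ^ 16 * Ee ^ 5
      + (-2 : PowerSeries ℤ) * X ^ 16 * Ee ^ 6
      + (-1 : PowerSeries ℤ) * X ^ 17 * Ee ^ 4
      + (3 : PowerSeries ℤ) * X ^ 18 * Ee ^ 6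
      + (-1 : PowerSeries ℤ) * X ^ 18 * Ee ^ 7
      + (3 : PowerSeries ℤ) * X ^ 20 * Ee ^ 7
      + (2 : PowerSeries ℤ) * X ^ 21 * Ee ^ 6
      + X ^ 21 * Ee ^ 7
      + (-1 : PowerSeries ℤ) * X ^ 22 * Ee ^ 6
      + (-3 : PowerSeries ℤ) * X ^ 22 * Ee ^ 7
      + (-2 : PowerSeries ℤ) * X ^ 23 * Ee ^ 6
      + X ^ 23 * Ee ^ 8
      + X ^ 24 * Ee ^ 7
      + (-4 : PowerSeries ℤ) * X ^ 25 * Ee ^ 7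
      + (-4 : PowerSeries ℤ) * X ^ 25 * Ee ^ 8
      + (-1 : PowerSeries ℤ) * X ^ 25 * Ee ^ 9
      + (-1 : PowerSeries ℤ) * X ^ 27 * Ee ^ 10
      + X ^ 28 * Ee ^ 9
      + X ^ 29 * Ee ^ 9
      + (2 : PowerSeries ℤ) * X ^ 29 * Ee ^ 10
      + (-1 : PowerSeries ℤ) * X ^ 30 * Ee ^ 9
      + (2 : PowerSeries ℤ) * X ^ 30 * Ee ^ 10
      + (-1 : PowerSeries ℤ) * X ^ 31 * Ee ^ 10
      + (-5 : PowerSeries ℤ) * X ^ 32 * Ee ^ 10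
      + (-6 : PowerSeries ℤ) * X ^ 34 * Ee ^ 11
      + (-2 : PowerSeries ℤ) * X ^ 34 * Ee ^ 12
      + (-1 : PowerSeries ℤ) * X ^ 36 * Ee ^ 12
      + (-1 : PowerSeries ℤ) * X ^ 36 * Ee ^ 13
      + X ^ 38 * Ee ^ 13
      + (-1 : PowerSeries ℤ) * X ^ 39 * Ee ^ 13
      + (-3 : PowerSeries ℤ) * X ^ 41 * Ee ^ 14
      + (-3 : PowerSeries ℤ) * X ^ 43 * Ee ^ 15
      + (-1 : PowerSeries ℤ) * X ^ 45 * Ee ^ 16) * Exc1.hE'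
end

section
/- Let B(n) be the number of lists of n integers, each belonging to {−2, −1, 1, 2}, whose total sum is 0. Then for every n ≥ 0: 108(n+1)(2n+1)·B(n) + (78n² + 246n + 216)·B(n+1) − (n+2)(17n − 9)·B(n+2) − 2(n+3)(2n+5)·B(n+3) = 0. -/
open Polynomial

/-- `B n` is the number of bridges of length `n` with step set `{-2, -1, 1, 2}`:
lists of `n` integers from that set with total sum `0`. -/
noncomputable def B (n : ℕ) : ℤ :=
  (Nat.card {l : List ℤ //
    l.length = n ∧
    (∀ x ∈ l, x ∈ ({-2, -1, 1, 2} : Set ℤ)) ∧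
    l.sum = 0} : ℤ)

/-! ### Part A: counting bridges via polynomial coefficients -/

def Tt (n : ℕ) (m : ℤ) : Type := {l : List ℤ //
    l.length = n ∧
    (∀ x ∈ l, x ∈ ({-2, -1, 1, 2} : Set ℤ)) ∧
    l.sum = m}

def consEquiv (n : ℕ) (m : ℤ) :
    Tt (n+1) m ≃ (Tt n (m+2) ⊕ Tt n (m+1) ⊕ Tt n (m-1) ⊕ Tt n (m-2)) where
  toFun p :=
    match p with
    | ⟨[], h⟩ => absurd h.1 (by simp)
    | ⟨a :: t, h⟩ =>
      if h2 : a = -2 then Sum.inl ⟨t, by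
        obtain ⟨h1, hmem, hsum⟩ := h
        refine ⟨by simpa using h1, fun x hx => hmem x (List.mem_cons_of_mem a hx), ?_⟩
        simp only [List.sum_cons] at hsum; omega⟩
      else if h1 : a = -1 then Sum.inr (Sum.inl ⟨t, by
        obtain ⟨h1', hmem, hsum⟩ := h
        refine ⟨by simpa using h1', fun x hx => hmem x (List.mem_cons_of_mem a hx), ?_⟩
        simp only [List.sum_cons] at hsum; omega⟩)
      else if h3 : a = 1 then Sum.inr (Sum.inr (Sum.inl ⟨t, by
        obtain ⟨h1', hmem, hsum⟩ := h
        refine ⟨by simpa using h1', fun x hx => hmem x (List.mem_cons_of_mem a hx), ?_⟩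
        simp only [List.sum_cons] at hsum; omega⟩))
      else Sum.inr (Sum.inr (Sum.inr ⟨t, by
        obtain ⟨h1', hmem, hsum⟩ := h
        have ha : a = 2 := by
          have := hmem a (List.mem_cons_self)
          simp only [Set.mem_insert_iff, Set.mem_singleton_iff] at this
          tauto
        refine ⟨by simpa using h1', fun x hx => hmem x (List.mem_cons_of_mem a hx), ?_⟩
        simp only [List.sum_cons] at hsum; omega⟩))
  invFun p :=
    match p with
    | Sum.inl ⟨t, h⟩ => ⟨(-2) :: t, by
        refine ⟨by simp [h.1], ?_, by simp only [List.sum_cons, h.2.2]; try ring⟩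
        intro x hx
        rcases List.mem_cons.mp hx with h'|h'
        · simp [h']
        · exact h.2.1 x h'⟩
    | Sum.inr (Sum.inl ⟨t, h⟩) => ⟨(-1) :: t, by
        refine ⟨by simp [h.1], ?_, by simp only [List.sum_cons, h.2.2]; try ring⟩
        intro x hx
        rcases List.mem_cons.mp hx with h'|h'
        · simp [h']
        · exact h.2.1 x h'⟩
    | Sum.inr (Sum.inr (Sum.inl ⟨t, h⟩)) => ⟨1 :: t, by
        refine ⟨by simp [h.1], ?_, by simp only [List.sum_cons, h.2.2]; try ring⟩
        intro x hx
        rcases List.mem_cons.mp hx with h'|h'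
        · simp [h']
        · exact h.2.1 x h'⟩
    | Sum.inr (Sum.inr (Sum.inr ⟨t, h⟩)) => ⟨2 :: t, by
        refine ⟨by simp [h.1], ?_, by simp only [List.sum_cons, h.2.2]; try ring⟩
        intro x hx
        rcases List.mem_cons.mp hx with h'|h'
        · simp [h']
        · exact h.2.1 x h'⟩
  left_inv p := by
    rcases p with ⟨l, h⟩
    cases l with
    | nil => exact absurd h.1 (by simp)
    | cons a t =>
      have ha : a = -2 ∨ a = -1 ∨ a = 1 ∨ a = 2 := by
        have := h.2.1 a (List.mem_cons_self)
        simpa [Set.mem_insert_iff] using this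
      rcases ha with h'|h'|h'|h' <;> subst h' <;> simp <;> rfl
  right_inv p := by
    rcases p with ⟨t, h⟩ | ⟨t, h⟩ | ⟨t, h⟩ | ⟨t, h⟩ <;> simp

lemma Tt_finite : ∀ (n : ℕ) (m : ℤ), Finite (Tt n m) := by
  intro n
  induction n with
  | zero =>
    intro m
    have : Subsingleton (Tt 0 m) := by
      constructor
      rintro ⟨l, hl⟩ ⟨l', hl'⟩
      have h1 : l = [] := List.length_eq_zero_iff.mp hl.1
      have h2 : l' = [] := List.length_eq_zero_iff.mp hl'.1
      subst h1; subst h2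
      rfl
    exact Finite.of_subsingleton
  | succ n ih =>
    intro m
    have h1 := ih (m+2); have h2 := ih (m+1); have h3 := ih (m-1); have h4 := ih (m-2)
    exact Finite.of_equiv _ (consEquiv n m).symm

lemma card_zero (m : ℤ) : Nat.card (Tt 0 m) = if m = 0 then 1 else 0 := by
  split_ifs with h
  · subst h
    have : Unique (Tt 0 0) := by
      refine ⟨⟨⟨[], by simp⟩⟩, ?_⟩
      rintro ⟨l, hl⟩
      have : l = [] := List.length_eq_zero_iff.mp hl.1
      subst this; rfl
    exact Nat.card_unique
  · have : IsEmpty (Tt 0 m) := by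
      constructor
      rintro ⟨l, hl⟩
      have : l = [] := List.length_eq_zero_iff.mp hl.1
      subst this
      exact h (by simpa using hl.2.2.symm)
    exact Nat.card_of_isEmpty

lemma card_succ (n : ℕ) (m : ℤ) :
    Nat.card (Tt (n+1) m) =
      Nat.card (Tt n (m+2)) + Nat.card (Tt n (m+1)) + Nat.card (Tt n (m-1)) + Nat.card (Tt n (m-2)) := by
  have h1 := Tt_finite n (m+2); have h2 := Tt_finite n (m+1)
  have h3 := Tt_finite n (m-1); have h4 := Tt_finite n (m-2)
  rw [Nat.card_congr (consEquiv n m), Nat.card_sum, Nat.card_sum, Nat.card_sum]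
  ring

noncomputable def Pq : ℚ[X] := 1 + X + X^3 + X^4

lemma card_eq_coeff : ∀ (n : ℕ) (m : ℤ),
    (Nat.card (Tt n m) : ℚ) =
      if 0 ≤ m + 2*n then (Pq^n).coeff (m + 2*n).toNat else 0 := by
  intro n
  induction n with
  | zero =>
    intro m
    rw [card_zero]
    simp only [pow_zero, Nat.cast_zero, mul_zero, add_zero, coeff_one]
    split_ifs with h1 h2 h3 <;> simp_all
    all_goals omega
  | succ n ih =>
    intro m
    rw [card_succ]
    push_cast
    rw [ih (m+2), ih (m+1), ih (m-1), ih (m-2)]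
    have hexp : Pq^(n+1) = Pq^n * 1 + Pq^n * X^1 + Pq^n * X^3 + Pq^n * X^4 := by
      rw [pow_succ]; unfold Pq; ring
    by_cases h : 0 ≤ m + 2*((n:ℤ)+1)
    · rw [if_pos h]
      set j : ℕ := (m + 2*((n:ℤ)+1)).toNat with hj
      rw [hexp]
      simp only [coeff_add, coeff_mul_X_pow', mul_one]
      have e2 : (0 ≤ m + 2 + 2*(n:ℕ)) := by omega
      have e2' : (m + 2 + 2*(n:ℕ)).toNat = j := by omega
      rw [if_pos e2, e2']
      by_cases c1 : 0 ≤ m + 1 + 2*(n:ℕ)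
      · rw [if_pos c1]
        have : 1 ≤ j := by omega
        rw [if_pos this]
        have : (m + 1 + 2*(n:ℕ)).toNat = j - 1 := by omega
        rw [this]
        by_cases c3 : 0 ≤ m - 1 + 2*(n:ℕ)
        · rw [if_pos c3]
          have h3 : 3 ≤ j := by omega
          rw [if_pos h3]
          have : (m - 1 + 2*(n:ℕ)).toNat = j - 3 := by omega
          rw [this]
          by_cases c4 : 0 ≤ m - 2 + 2*(n:ℕ)
          · rw [if_pos c4]
            have h4 : 4 ≤ j := by omega
            rw [if_pos h4]
            have : (m - 2 + 2*(n:ℕ)).toNat = j - 4 := by omega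
            rw [this]; try ring
          · rw [if_neg c4]
            have h4 : ¬ (4 ≤ j) := by omega
            rw [if_neg h4]; try ring
        · rw [if_neg c3]
          have h3 : ¬ (3 ≤ j) := by omega
          have h4 : ¬ (4 ≤ j) := by omega
          have c4 : ¬ (0 ≤ m - 2 + 2*(n:ℕ)) := by omega
          rw [if_neg h3, if_neg h4, if_neg c4]; try ring
      · rw [if_neg c1]
        have h1 : ¬ (1 ≤ j) := by omega
        have h3 : ¬ (3 ≤ j) := by omega
        have h4 : ¬ (4 ≤ j) := by omega
        have c3 : ¬ (0 ≤ m - 1 + 2*(n:ℕ)) := by omega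
        have c4 : ¬ (0 ≤ m - 2 + 2*(n:ℕ)) := by omega
        rw [if_neg h1, if_neg h3, if_neg h4, if_neg c3, if_neg c4]; try ring
    · rw [if_neg h]
      have c1 : ¬ (0 ≤ m + 2 + 2*(n:ℕ)) := by omega
      have c2 : ¬ (0 ≤ m + 1 + 2*(n:ℕ)) := by omega
      have c3 : ¬ (0 ≤ m - 1 + 2*(n:ℕ)) := by omega
      have c4 : ¬ (0 ≤ m - 2 + 2*(n:ℕ)) := by omega
      rw [if_neg c1, if_neg c2, if_neg c3, if_neg c4]; try ring

/-! ### Part B: creative telescoping certificate -/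

/-- Zeilberger certificate. -/
noncomputable def Qc (a : ℚ) : ℚ[X] :=
  C (2*a+5) + C (7*a+18) * X + C (17*a+18) * X^2 + C (34*a+28) * X^3
  + C (9*a+18) * X^4 + C (15*a+18) * X^5 - C (15*a+18) * X^7 - C (9*a+18) * X^8
  - C (34*a+28) * X^9 - C (17*a+18) * X^10 - C (7*a+18) * X^11 - C (2*a+5) * X^12

noncomputable def Qd (a : ℚ) : ℚ[X] :=
  C (7*a+18) + C (34*a+36) * X + C (102*a+84) * X^2
  + C (36*a+72) * X^3 + C (75*a+90) * X^4 - C (105*a+126) * X^6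
  - C (72*a+144) * X^7 - C (306*a+252) * X^8 - C (170*a+180) * X^9
  - C (77*a+198) * X^10 - C (24*a+60) * X^11

lemma deriv_Qc (a : ℚ) : derivative (Qc a) = Qd a := by
  unfold Qc Qd
  simp only [derivative_add, derivative_sub, derivative_mul, derivative_C,
    derivative_X_pow, derivative_X, derivative_one, zero_mul, mul_one, zero_add,
    mul_zero, add_zero]
  simp only [map_mul, map_add, map_sub, map_ofNat, map_one, map_natCast]
  push_cast
  ring

lemma deriv_Pq : derivative Pq = 1 + C 3 * X^2 + C 4 * X^3 := by
  unfold Pq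
  simp only [derivative_add, derivative_one, derivative_X_pow, derivative_X,
    map_ofNat, map_natCast]
  push_cast
  ring

/-- The key certificate identity. -/
lemma starId (a : ℚ) :
    C (108*(a+1)*(2*a+1)) * Pq * X^6 + C (78*a^2+246*a+216) * Pq^2 * X^4
      - C ((a+2)*(17*a-9)) * Pq^3 * X^2 - C (2*(a+3)*(2*a+5)) * Pq^4
    = X * Pq * derivative (Qc a)
      + Qc a * (C a * X * derivative Pq - C (2*a+6) * Pq) := by
  rw [deriv_Qc, deriv_Pq]
  unfold Pq Qc Qd
  simp only [map_mul, map_add, map_sub, map_ofNat, map_one, map_pow]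
  ring

lemma pq_ne : (Pq : ℚ[X]) ≠ 0 := by
  intro h
  have := congrArg (eval 0) h
  simp [Pq] at this

lemma derivP_pow (n : ℕ) :
    Pq * derivative (Pq ^ n) = C (n : ℚ) * (Pq ^ n * derivative Pq) := by
  cases n with
  | zero => simp
  | succ k =>
    rw [derivative_pow]
    simp only [Nat.add_sub_cancel]
    ring

lemma keyS (n : ℕ) :
    C (108*((n:ℚ)+1)*(2*(n:ℚ)+1)) * (Pq^n * X^6)
      + C (78*(n:ℚ)^2+246*(n:ℚ)+216) * (Pq^(n+1) * X^4)
      - C (((n:ℚ)+2)*(17*(n:ℚ)-9)) * (Pq^(n+2) * X^2)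
      - C (2*((n:ℚ)+3)*(2*(n:ℚ)+5)) * Pq^(n+3)
    = X * derivative (Qc (n:ℚ) * Pq^n) - C (2*(n:ℚ)+6) * (Qc (n:ℚ) * Pq^n) := by
  apply mul_left_cancel₀ pq_ne
  rw [derivative_mul]
  linear_combination (Pq ^ n) * starId ((n:ℚ)) - (X * Qc ((n:ℚ))) * derivP_pow n

lemma recurQ (n : ℕ) :
    108*((n:ℚ)+1)*(2*(n:ℚ)+1) * (Pq^n).coeff (2*n)
      + (78*(n:ℚ)^2+246*(n:ℚ)+216) * (Pq^(n+1)).coeff (2*n+2)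
      - ((n:ℚ)+2)*(17*(n:ℚ)-9) * (Pq^(n+2)).coeff (2*n+4)
      - 2*((n:ℚ)+3)*(2*(n:ℚ)+5) * (Pq^(n+3)).coeff (2*n+6) = 0 := by
  have h := congrArg (fun p : ℚ[X] => p.coeff (2*n+6)) (keyS n)
  simp only [coeff_add, coeff_sub, coeff_C_mul] at h
  have e0 : (Pq^n * X^6).coeff (2*n+6) = (Pq^n).coeff (2*n) := coeff_mul_X_pow _ 6 (2*n)
  have e1 : (Pq^(n+1) * X^4).coeff (2*n+6) = (Pq^(n+1)).coeff (2*n+2) := by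
    have := coeff_mul_X_pow (Pq^(n+1)) 4 (2*n+2)
    rwa [show 2*n+2+4 = 2*n+6 from by ring] at this
  have e2 : (Pq^(n+2) * X^2).coeff (2*n+6) = (Pq^(n+2)).coeff (2*n+4) := by
    have := coeff_mul_X_pow (Pq^(n+2)) 2 (2*n+4)
    rwa [show 2*n+4+2 = 2*n+6 from by ring] at this
  have er : (X * derivative (Qc (n:ℚ) * Pq^n)).coeff (2*n+6)
      = (Qc (n:ℚ) * Pq^n).coeff (2*n+6) * (2*(n:ℚ)+6) := by
    have h1 := coeff_X_mul (derivative (Qc (n:ℚ) * Pq^n)) (2*n+5)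
    have h2 := coeff_derivative (Qc (n:ℚ) * Pq^n) (2*n+5)
    rw [show 2*n+5+1 = 2*n+6 from by ring] at h1 h2
    rw [h1, h2]
    push_cast
    ring
  rw [e0, e1, e2, er] at h
  linear_combination h

lemma B_coeff (m : ℕ) : ((B m : ℚ)) = (Pq^m).coeff (2*m) := by
  have hB : B m = (Nat.card (Tt m 0) : ℤ) := rfl
  rw [hB]
  push_cast
  rw [card_eq_coeff m 0, if_pos (by omega)]
  congr 1
  omega

theorem bridge_recurrence (n : ℕ) :
    108 * ((n : ℤ) + 1) * (2 * n + 1) * B n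
      + (78 * (n : ℤ) ^ 2 + 246 * n + 216) * B (n + 1)
      - ((n : ℤ) + 2) * (17 * n - 9) * B (n + 2)
      - 2 * ((n : ℤ) + 3) * (2 * n + 5) * B (n + 3) = 0 := by
  have key : 108*((n:ℚ)+1)*(2*(n:ℚ)+1) * (B n : ℚ)
      + (78*(n:ℚ)^2+246*(n:ℚ)+216) * (B (n+1) : ℚ)
      - ((n:ℚ)+2)*(17*(n:ℚ)-9) * (B (n+2) : ℚ)
      - 2*((n:ℚ)+3)*(2*(n:ℚ)+5) * (B (n+3) : ℚ) = 0 := by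
    rw [B_coeff n, B_coeff (n+1), B_coeff (n+2), B_coeff (n+3),
      show 2*(n+1) = 2*n+2 from by ring, show 2*(n+2) = 2*n+4 from by ring,
      show 2*(n+3) = 2*n+6 from by ring]
    linear_combination recurQ n
  exact_mod_cast key
end

section
/- Let B(n) be the number of lists of n integers, each belonging to {−2, −1, 1, 2}, whose total sum is 0. Then for every n ≥ 0: 18(2n+1)(5n+8)(n+1)·B(n) + (n+1)(35n² + 91n + 54)·B(n+1) − 2(n+2)(2n+3)(5n+3)·B(n+2) = 0. -/
open Polynomial

noncomputable def pB : ℤ[X] := 1 + X + X ^ 3 + X ^ 4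

/-- coefficient with integer index -/
noncomputable def cf (q : ℤ[X]) (m : ℤ) : ℤ := if 0 ≤ m then q.coeff m.toNat else 0

lemma cf_mul_X_pow (q : ℤ[X]) (a : ℕ) (m : ℤ) : cf (q * X ^ a) m = cf q (m - a) := by
  unfold cf
  rcases le_or_gt 0 m with hm | hm
  · rw [if_pos hm, coeff_mul_X_pow']
    rcases le_or_gt (a : ℤ) m with ham | ham
    · rw [if_pos (by omega), if_pos (by omega : (0:ℤ) ≤ m - a)]
      congr 1
      omega
    · rw [if_neg (by omega), if_neg (by omega)]
  · rw [if_neg (by omega), if_neg (by omega)]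

lemma cf_add (q r : ℤ[X]) (m : ℤ) : cf (q + r) m = cf q m + cf r m := by
  unfold cf; split <;> simp

lemma cf_pB_mul (q : ℤ[X]) (m : ℤ) :
    cf (pB * q) m = cf q m + cf q (m-1) + cf q (m-3) + cf q (m-4) := by
  have h : pB * q = q * X ^ 0 + q * X ^ 1 + q * X ^ 3 + q * X ^ 4 := by rw [pB]; ring
  rw [h, cf_add, cf_add, cf_add, cf_mul_X_pow, cf_mul_X_pow, cf_mul_X_pow, cf_mul_X_pow]
  norm_num

lemma cf_one (m : ℤ) : cf 1 m = if m = 0 then 1 else 0 := by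
  unfold cf
  rcases le_or_gt 0 m with hm | hm
  · rw [if_pos hm, coeff_one]
    by_cases h : m = 0
    · simp [h]
    · rw [if_neg (by omega), if_neg h]
  · rw [if_neg (by omega), if_neg (by omega)]

abbrev AB (n : ℕ) (m : ℤ) :=
  {l : List ℤ // l.length = n ∧ (∀ x ∈ l, x ∈ ({-2, -1, 1, 2} : Set ℤ)) ∧ l.sum = m}

def consA (s : ℤ) (hs : s ∈ ({-2, -1, 1, 2} : Set ℤ)) {n : ℕ} {m m' : ℤ}
    (h : s + m' = m) (t : AB n m') : AB (n + 1) m :=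
  ⟨s :: t.1, by
    obtain ⟨h1, h2, h3⟩ := t.2
    refine ⟨by simp [h1], ?_, by simp [h3, ← h]⟩
    intro x hx
    rcases List.mem_cons.mp hx with hx | hx
    · subst hx; exact hs
    · exact h2 x hx⟩

def consF (n : ℕ) (m : ℤ) :
    (AB n (m + 2) ⊕ AB n (m + 1) ⊕ AB n (m - 1) ⊕ AB n (m - 2)) → AB (n + 1) m :=
  Sum.elim (consA (-2) (by simp) (by ring))
    (Sum.elim (consA (-1) (by simp) (by ring))
      (Sum.elim (consA 1 (by simp) (by ring))
        (consA 2 (by simp) (by ring))))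

lemma consF_bij (n : ℕ) (m : ℤ) : Function.Bijective (consF n m) := by
  constructor
  · intro x y hxy
    have hv := congrArg Subtype.val hxy
    rcases x with ⟨t, ht⟩ | ⟨t, ht⟩ | ⟨t, ht⟩ | ⟨t, ht⟩ <;>
      rcases y with ⟨u, hu⟩ | ⟨u, hu⟩ | ⟨u, hu⟩ | ⟨u, hu⟩ <;>
      simp only [consF, consA, Sum.elim_inl, Sum.elim_inr, List.cons.injEq] at hv <;>
      simp_all [Subtype.ext_iff]
  · rintro ⟨l, hlen, hmem, hsum⟩
    cases l with
    | nil => simp at hlen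
    | cons s t =>
      have hlen' : t.length = n := by simpa using hlen
      have hmem' : ∀ x ∈ t, x ∈ ({-2, -1, 1, 2} : Set ℤ) :=
        fun x hx => hmem x (List.mem_cons_of_mem s hx)
      have hsum' : s + t.sum = m := by simpa using hsum
      have hs4 := hmem s (List.mem_cons_self)
      simp only [Set.mem_insert_iff, Set.mem_singleton_iff] at hs4
      rcases hs4 with hs | hs | hs | hs
      · exact ⟨Sum.inl ⟨t, hlen', hmem', by omega⟩, by
          simp [consF, consA, hs]⟩
      · exact ⟨Sum.inr (Sum.inl ⟨t, hlen', hmem', by omega⟩), by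
          simp [consF, consA, hs]⟩
      · exact ⟨Sum.inr (Sum.inr (Sum.inl ⟨t, hlen', hmem', by omega⟩)), by
          simp [consF, consA, hs]⟩
      · exact ⟨Sum.inr (Sum.inr (Sum.inr ⟨t, hlen', hmem', by omega⟩)), by
          simp [consF, consA, hs]⟩

lemma finAB : ∀ (n : ℕ) (m : ℤ), Finite (AB n m) := by
  intro n
  induction n with
  | zero =>
      intro m
      have : Subsingleton (AB 0 m) := by
        constructor
        rintro ⟨l, hl⟩ ⟨l', hl'⟩
        apply Subtype.ext
        show l = l'
        rw [List.length_eq_zero_iff.mp hl.1, List.length_eq_zero_iff.mp hl'.1]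
      exact Finite.of_subsingleton
  | succ n ih =>
      intro m
      haveI := ih (m + 2); haveI := ih (m + 1); haveI := ih (m - 1); haveI := ih (m - 2)
      exact Finite.of_surjective (consF n m) (consF_bij n m).2

lemma cardAB : ∀ (n : ℕ) (m : ℤ), (Nat.card (AB n m) : ℤ) = cf (pB ^ n) (m + 2 * n) := by
  intro n
  induction n with
  | zero =>
      intro m
      rw [pow_zero, cf_one]
      push_cast
      rw [add_zero]
      by_cases h : m = 0
      · subst h
        haveI : Unique (AB 0 0) := by
          refine ⟨⟨⟨[], by simp⟩⟩, ?_⟩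
          rintro ⟨l, hl⟩
          apply Subtype.ext
          exact List.length_eq_zero_iff.mp hl.1
        rw [Nat.card_unique, if_pos rfl]
        norm_num
      · haveI : IsEmpty (AB 0 m) := by
          constructor
          rintro ⟨l, hl, hmem, hsum⟩
          rw [List.length_eq_zero_iff.mp hl] at hsum
          simp at hsum
          exact h hsum.symm
        rw [Nat.card_of_isEmpty, if_neg h]
        norm_num
  | succ n ih =>
      intro m
      haveI := finAB n (m + 2); haveI := finAB n (m + 1)
      haveI := finAB n (m - 1); haveI := finAB n (m - 2)
      have e := Nat.card_congr (Equiv.ofBijective _ (consF_bij n m)).symm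
      rw [e, Nat.card_sum, Nat.card_sum, Nat.card_sum]
      push_cast
      rw [ih, ih, ih, ih]
      rw [pow_succ', cf_pB_mul]
      have e1 : m + 2 + 2 * (n:ℤ) = m + 2 * (n + 1) := by ring
      have e2 : m + 1 + 2 * (n:ℤ) = m + 2 * (n + 1) - 1 := by ring
      have e3 : m - 1 + 2 * (n:ℤ) = m + 2 * (n + 1) - 3 := by ring
      have e4 : m - 2 + 2 * (n:ℤ) = m + 2 * (n + 1) - 4 := by ring
      rw [e1, e2, e3, e4]
      ring

noncomputable def UB (n : ℤ) : ℤ[X] :=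
  C (10*n^2+21*n+9) + C (25*n^2+55*n+24) * X - C (5*n+9) * X^2
  + C (10*n^2+26*n+18) * X^3 - C (10*n^2+26*n+18) * X^5 + C (5*n+9) * X^6
  - C (25*n^2+55*n+24) * X^7 - C (10*n^2+21*n+9) * X^8

lemma derivative_pB : derivative pB = 1 + C 3 * X ^ 2 + C 4 * X ^ 3 := by
  simp only [pB, derivative_add, derivative_one, derivative_X, derivative_X_pow]
  norm_num

lemma derivative_UB (n : ℤ) : derivative (UB n) =
    C (25*n^2+55*n+24) - C (5*n+9) * (C 2 * X)
    + C (10*n^2+26*n+18) * (C 3 * X^2) - C (10*n^2+26*n+18) * (C 5 * X^4)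
    + C (5*n+9) * (C 6 * X^5) - C (25*n^2+55*n+24) * (C 7 * X^6)
    - C (10*n^2+21*n+9) * (C 8 * X^7) := by
  simp only [UB, derivative_add, derivative_sub, derivative_mul, derivative_C,
    derivative_X, derivative_X_pow]
  norm_num

set_option maxHeartbeats 1000000 in
lemma cert (n : ℤ) :
    (C (180*n^3+558*n^2+522*n+144) * X^4 + C (35*n^3+126*n^2+145*n+54) * X^2 * pB
      - C (20*n^3+82*n^2+102*n+36) * pB^2) * pB
    = (X * derivative (UB n) - C (2*n+4) * UB n) * pB + C n * X * UB n * derivative pB := by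
  rw [derivative_pB, derivative_UB, UB, pB]
  simp only [map_add, map_mul, map_pow, map_ofNat, map_one]
  ring

lemma pB_ne_zero : pB ≠ 0 := by
  intro h
  have : pB.eval 1 = 0 := by rw [h]; simp
  simp [pB] at this

lemma keyH (n : ℕ) :
    C (180*(n:ℤ)^3+558*(n:ℤ)^2+522*(n:ℤ)+144) * X^4 * pB^n
      + C (35*(n:ℤ)^3+126*(n:ℤ)^2+145*(n:ℤ)+54) * X^2 * pB^(n+1)
      - C (20*(n:ℤ)^3+82*(n:ℤ)^2+102*(n:ℤ)+36) * pB^(n+2)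
    = X * derivative (UB n * pB^n) - C (2*(n:ℤ)+4) * (UB n * pB^n) := by
  rw [derivative_mul, derivative_pow]
  cases n with
  | zero =>
      have h := cert 0
      simp only [map_zero, zero_mul, add_zero] at h
      have h2 := mul_right_cancel₀ pB_ne_zero h
      norm_num at h2 ⊢
      linear_combination h2
  | succ m =>
      have h := cert ((m : ℤ) + 1)
      have h2 := congrArg (· * pB ^ m) h
      simp only [Nat.succ_sub_one] at *
      push_cast
      linear_combination h2

noncomputable def aB (n : ℕ) : ℤ := (pB ^ n).coeff (2 * n)

lemma alg_rec (n : ℕ) :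
    (180*(n:ℤ)^3+558*(n:ℤ)^2+522*(n:ℤ)+144) * aB n
      + (35*(n:ℤ)^3+126*(n:ℤ)^2+145*(n:ℤ)+54) * aB (n+1)
      - (20*(n:ℤ)^3+82*(n:ℤ)^2+102*(n:ℤ)+36) * aB (n+2) = 0 := by
  have h := congrArg (fun q : ℤ[X] => q.coeff (2*n+4)) (keyH n)
  simp only [coeff_sub, coeff_add] at h
  rw [show (C (180*(n:ℤ)^3+558*(n:ℤ)^2+522*(n:ℤ)+144) * X^4 * pB^n)
        = C (180*(n:ℤ)^3+558*(n:ℤ)^2+522*(n:ℤ)+144) * (pB^n * X^4) by ring,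
      show (C (35*(n:ℤ)^3+126*(n:ℤ)^2+145*(n:ℤ)+54) * X^2 * pB^(n+1))
        = C (35*(n:ℤ)^3+126*(n:ℤ)^2+145*(n:ℤ)+54) * (pB^(n+1) * X^2) by ring,
      show 2*n+4 = (2*n+3)+1 from rfl, coeff_X_mul] at h
  rw [coeff_C_mul, coeff_C_mul, coeff_C_mul, coeff_mul_X_pow', coeff_mul_X_pow',
    coeff_derivative] at h
  simp only [show 2*n+3+1 = 2*(n+2) by omega] at h
  simp only [show (4:ℕ) ≤ 2*(n+2) by omega, show (2:ℕ) ≤ 2*(n+2) by omega, if_true,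
    show 2*(n+2)-4 = 2*n by omega, show 2*(n+2)-2 = 2*(n+1) by omega, coeff_C_mul] at h
  simp only [aB]
  rw [h]
  push_cast
  ring


lemma B_eq_aB (n : ℕ) : B n = aB n := by
  have h := cardAB n 0
  rw [zero_add] at h
  have h2 : cf (pB ^ n) (2 * (n:ℤ)) = (pB ^ n).coeff (2 * n) := by
    unfold cf
    rw [if_pos (by positivity), show (2*(n:ℤ)) = ((2*n : ℕ) : ℤ) by push_cast; ring,
      Int.toNat_natCast]
  rw [h2] at h
  exact h

theorem bridge_recurrence_AZd (n : ℕ) :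
    18 * (2 * (n : ℤ) + 1) * (5 * n + 8) * (n + 1) * B n
      + ((n : ℤ) + 1) * (35 * n ^ 2 + 91 * n + 54) * B (n + 1)
      - 2 * ((n : ℤ) + 2) * (2 * n + 3) * (5 * n + 3) * B (n + 2) = 0 := by
  rw [B_eq_aB, B_eq_aB, B_eq_aB]
  have h := alg_rec n
  push_cast at h ⊢
  linear_combination h
end

section
/- Let G(t) ∈ ℤ⟦t⟧ be the power series whose coefficient of t^n is the number of lists of n integers, each belonging to {−2, −1, 0, 1}, whose total sum is 0. Then (16t³ + 8t² + 11t − 4)G³ + (3 − 2t)G + 1 = 0 in ℤ⟦t⟧. -/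
open PowerSeries

/-- The generating function for bridges with step set `{-2, -1, 0, 1}`: the
coefficient of `t^n` is the number of lists of `n` integers from that set with
total sum `0`. -/
noncomputable def bridgeGF : PowerSeries ℤ :=
  PowerSeries.mk fun n =>
    (Nat.card {l : List ℤ //
      l.length = n ∧
      (∀ x ∈ l, x ∈ ({-2, -1, 0, 1} : Set ℤ)) ∧
      l.sum = 0} : ℤ)

namespace BridgeAux


def gmap : ℤ → Fin 4 := fun x => if x = -2 then 3 else if x = -1 then 2 else if x = 0 then 1 else 0
def hmap : Fin 4 → ℤ := fun a => 1 - (a : ℤ)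

lemma hg {x : ℤ} (hx : x ∈ ({-2, -1, 0, 1} : Set ℤ)) : hmap (gmap x) = x := by
  simp only [Set.mem_insert_iff, Set.mem_singleton_iff] at hx
  rcases hx with h | h | h | h <;> subst h <;> decide

lemma gh (a : Fin 4) : gmap (hmap a) = a := by fin_cases a <;> decide

lemma hmem (a : Fin 4) : hmap a ∈ ({-2, -1, 0, 1} : Set ℤ) := by
  fin_cases a <;> simp [hmap]

/-- the list associated to a function -/
noncomputable def toL (n : ℕ) (f : Fin n → Fin 4) : List ℤ := List.ofFn fun i => hmap (f i)

lemma card_lists (n : ℕ) :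
    Nat.card {l : List ℤ //
      l.length = n ∧ (∀ x ∈ l, x ∈ ({-2, -1, 0, 1} : Set ℤ)) ∧ l.sum = 0}
    = (Finset.univ.filter fun f : Fin n → Fin 4 => ∑ i, ((f i : ℕ)) = n).card := by
  rw [← Nat.card_eq_finsetCard]
  refine (Nat.card_congr (Equiv.ofBijective ?_ ⟨?_, ?_⟩)).symm
  · refine fun f => ⟨toL n f.1, List.length_ofFn, ?_, ?_⟩
    · intro x hx
      rw [toL, List.mem_ofFn] at hx
      obtain ⟨i, rfl⟩ := hx
      exact hmem _
    · have hf := f.2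
      simp only [Finset.mem_filter, Finset.mem_univ, true_and] at hf
      have : (∑ i, ((f.1 i : ℕ) : ℤ)) = (n : ℤ) := by exact_mod_cast hf
      rw [toL, List.sum_ofFn]
      simp only [hmap]
      rw [Finset.sum_sub_distrib]
      simp [this]
  · intro f g hfg
    apply Subtype.ext
    funext i
    have h2 : (fun j => hmap (f.1 j)) = fun j => hmap (g.1 j) := by
      apply List.ofFn_injective
      exact congrArg Subtype.val hfg
    have h3 := congrFun h2 i
    have : (f.1 i : ℤ) = (g.1 i : ℤ) := by
      simp only [hmap] at h3; omega
    exact Fin.val_injective (by exact_mod_cast this)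
  · rintro ⟨l, hlen, hmem', hsum⟩
    subst hlen
    refine ⟨⟨fun i => gmap (l.get i), ?_⟩, ?_⟩
    · simp only [Finset.mem_filter, Finset.mem_univ, true_and]
      have key : ∀ i : Fin l.length, ((gmap (l.get i) : ℕ) : ℤ) = 1 - l.get i := by
        intro i
        have := hg (hmem' _ (List.get_mem l i))
        simp only [hmap, Fin.eta] at this
        omega
      have hsum' : ∑ i : Fin l.length, l.get i = 0 := by
        rw [← List.sum_ofFn]
        rw [List.ofFn_get]
        exact hsum
      have : ((∑ i : Fin l.length, (gmap (l.get i) : ℕ) : ℕ) : ℤ) = (l.length : ℤ) := by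
        push_cast
        rw [Finset.sum_congr rfl fun i _ => key i, Finset.sum_sub_distrib, hsum', sub_zero]
        simp
      exact_mod_cast this
    · apply Subtype.ext
      simp only [toL]
      have : (fun i => hmap (gmap (l.get i))) = fun i => l.get i := by
        funext i
        exact hg (hmem' _ (List.get_mem l i))
      rw [this, List.ofFn_get]

lemma coeff_pow_eq_card (n s : ℕ) :
    ((1 + Polynomial.X + Polynomial.X ^ 2 + Polynomial.X ^ 3 : Polynomial ℤ) ^ n).coeff s
    = ((Finset.univ.filter fun f : Fin n → Fin 4 => ∑ i, ((f i : ℕ)) = s).card : ℤ) := by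
  have h1 : (1 + Polynomial.X + Polynomial.X ^ 2 + Polynomial.X ^ 3 : Polynomial ℤ)
      = ∑ a : Fin 4, Polynomial.X ^ (a : ℕ) := by
    rw [Fin.sum_univ_four]; norm_num
  rw [h1, ← Fin.prod_const, Finset.prod_univ_sum]
  simp only [Finset.prod_pow_eq_pow_sum, Polynomial.finset_sum_coeff, Polynomial.coeff_X_pow,
    Fintype.piFinset_univ]
  rw [Finset.card_filter]
  push_cast
  refine Finset.sum_congr rfl fun f _ => ?_
  simp [eq_comm]



noncomputable def Fstep (z : PowerSeries ℤ) : PowerSeries ℤ := X * (1 + z + z ^ 2 + z ^ 3)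

noncomputable def ybr : PowerSeries ℤ := PowerSeries.mk fun n => coeff n (Fstep^[n + 1] 0)

lemma Fdvd {z w : PowerSeries ℤ} {n : ℕ} (h : X ^ n ∣ z - w) :
    X ^ (n + 1) ∣ Fstep z - Fstep w := by
  obtain ⟨c, hc⟩ := h
  refine ⟨c * (1 + z + w + z ^ 2 + z * w + w ^ 2), ?_⟩
  simp only [Fstep]
  linear_combination (X * (1 + z + w + z ^ 2 + z * w + w ^ 2)) * hc

lemma hd (n : ℕ) : X ^ n ∣ (Fstep^[n + 1] 0 - Fstep^[n] 0 : PowerSeries ℤ) := by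
  induction n with
  | zero => exact ⟨Fstep^[1] 0 - Fstep^[0] 0, by rw [pow_zero, one_mul]⟩
  | succ n ih =>
      have := Fdvd ih
      rwa [← Function.iterate_succ_apply' Fstep (n + 1), ← Function.iterate_succ_apply' Fstep n]
        at this

lemma hstab {m n : ℕ} (h : m ≤ n) : X ^ m ∣ (Fstep^[n] 0 - Fstep^[m] 0 : PowerSeries ℤ) := by
  induction n with
  | zero => interval_cases m; simp
  | succ n ih =>
      rcases Nat.lt_or_ge m (n + 1) with hm | hm
      · have h1 : X ^ m ∣ (Fstep^[n + 1] 0 - Fstep^[n] 0 : PowerSeries ℤ) :=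
          dvd_trans (pow_dvd_pow X (Nat.lt_succ_iff.mp hm)) (hd n)
        have h2 := ih (Nat.lt_succ_iff.mp hm)
        have : (Fstep^[n + 1] 0 - Fstep^[m] 0 : PowerSeries ℤ)
            = (Fstep^[n + 1] 0 - Fstep^[n] 0) + (Fstep^[n] 0 - Fstep^[m] 0) := by ring
        rw [this]; exact dvd_add h1 h2
      · have : m = n + 1 := le_antisymm h hm
        subst this; simp

lemma ybr_agree {n m : ℕ} (h : n < m) : coeff n ybr = coeff n (Fstep^[m] 0) := by
  have h1 : X ^ (n + 1) ∣ (Fstep^[m] 0 - Fstep^[n + 1] 0 : PowerSeries ℤ) := hstab h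
  rw [X_pow_dvd_iff] at h1
  have := h1 n (Nat.lt_succ_self n)
  rw [map_sub, sub_eq_zero] at this
  rw [ybr, coeff_mk, ← this]

lemma ybr_eq : ybr = X * (1 + ybr + ybr ^ 2 + ybr ^ 3) := by
  have key : ∀ n : ℕ, coeff n ybr = coeff n (Fstep ybr) := by
    intro n
    have h1 : X ^ (n + 1) ∣ (ybr - Fstep^[n + 1] 0 : PowerSeries ℤ) := by
      rw [X_pow_dvd_iff]
      intro k hk
      rw [map_sub, sub_eq_zero]
      exact ybr_agree hk
    have h2 := Fdvd h1
    rw [X_pow_dvd_iff] at h2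
    have h3 := h2 n (by omega)
    rw [map_sub, sub_eq_zero] at h3
    rw [← Function.iterate_succ_apply' Fstep (n + 1)] at h3
    exact (ybr_agree (show n < n + 2 by omega)).trans h3.symm
  have h : ybr = Fstep ybr := PowerSeries.ext key
  nth_rewrite 1 [h]
  rfl



noncomputable section

abbrev K : Type := LaurentSeries ℤ

def uu : K := HahnSeries.single 1 1
def vv : K := HahnSeries.single (-1) 1

lemma huv : uu * vv = 1 := by
  rw [uu, vv, HahnSeries.single_mul_single]; norm_num

def ι : ℤ →+* K := HahnSeries.C
def mapT : PowerSeries ℤ →+* PowerSeries K := PowerSeries.map ι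
def mapU : PowerSeries ℤ →+* K := HahnSeries.ofPowerSeries ℤ ℤ
def mapUT : PowerSeries (PowerSeries ℤ) →+* PowerSeries K := PowerSeries.map mapU
def liftT : PowerSeries ℤ →+* PowerSeries (PowerSeries ℤ) := PowerSeries.map (PowerSeries.C (R := ℤ))

lemma mapUT_liftT (a : PowerSeries ℤ) : mapUT (liftT a) = mapT a := by
  ext n
  rw [mapUT, mapT, liftT, PowerSeries.coeff_map, PowerSeries.coeff_map, PowerSeries.coeff_map,
    mapU, HahnSeries.ofPowerSeries_C]
  rfl

lemma mapUT_X : mapUT X = X := PowerSeries.map_X mapU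
lemma mapU_X : mapU X = uu := by rw [mapU, HahnSeries.ofPowerSeries_X]; rfl

def φu : PowerSeries ℤ := 1 + X + X ^ 2 + X ^ 3
def B : PowerSeries ℤ := PowerSeries.mk fun n => coeff n (φu ^ n)
def S : K := vv * mapU φu
def W : PowerSeries K := PowerSeries.mk fun n => S ^ n

lemma hW : (1 - PowerSeries.C S * X) * W = 1 := by
  ext n
  cases n with
  | zero =>
      simp [PowerSeries.coeff_zero_eq_constantCoeff, map_mul, map_sub, W]
  | succ n =>
      rw [sub_mul, one_mul, map_sub, mul_assoc, coeff_C_mul, coeff_succ_X_mul]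
      simp only [W, coeff_mk, PowerSeries.coeff_one, Nat.succ_ne_zero, if_false]
      rw [pow_succ']
      ring

def CT (f : PowerSeries K) : PowerSeries ℤ := PowerSeries.mk fun n => (coeff n f).coeff 0

lemma CT_add (f g : PowerSeries K) : CT (f + g) = CT f + CT g := by
  ext n; simp [CT, HahnSeries.coeff_add]

lemma CT_mapT_mul (a : PowerSeries ℤ) (f : PowerSeries K) :
    CT (mapT a * f) = a * CT f := by
  ext n
  rw [CT, coeff_mk, PowerSeries.coeff_mul, PowerSeries.coeff_mul]
  rw [← HahnSeries.coeff.addMonoidHom_apply, map_sum]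
  refine Finset.sum_congr rfl fun p _ => ?_
  rw [HahnSeries.coeff.addMonoidHom_apply, mapT, PowerSeries.coeff_map]
  show (ι ((coeff p.1) a) * (coeff p.2 f)).coeff 0 = _
  rw [ι, HahnSeries.C_apply, HahnSeries.coeff_single_zero_mul]
  rw [CT, coeff_mk]

lemma CT_W : CT W = B := by
  ext n
  rw [CT, coeff_mk, B, coeff_mk, W, coeff_mk]
  rw [S, mul_pow, ← map_pow]
  have h1 : (vv : K) ^ n = HahnSeries.single (-(n : ℤ)) 1 := by
    rw [vv, HahnSeries.single_pow]; norm_num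
  rw [h1]
  have h2 : (0 : ℤ) = (n : ℤ) + (-(n : ℤ)) := by ring
  rw [h2, HahnSeries.coeff_single_mul_add, one_mul]
  rw [mapU, HahnSeries.ofPowerSeries_apply_coeff]

-- the C-side objects
def U : PowerSeries (PowerSeries ℤ) := PowerSeries.C (X : PowerSeries ℤ)
def yU : PowerSeries (PowerSeries ℤ) := liftT ybr
def Chat : PowerSeries (PowerSeries ℤ) :=
  1 - X * (U ^ 2 + (1 + yU) * U + (1 + yU + yU ^ 2))

lemma hChat_unit : IsUnit Chat := by
  rw [PowerSeries.isUnit_iff_constantCoeff]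
  simp [Chat]

def Vhat : PowerSeries (PowerSeries ℤ) := ↑hChat_unit.unit⁻¹

lemma hCVhat : Chat * Vhat = 1 := hChat_unit.mul_val_inv

def Cc : PowerSeries K := mapUT Chat
def Vv : PowerSeries K := mapUT Vhat

lemma hCV : Cc * Vv = 1 := by rw [Cc, Vv, ← map_mul, hCVhat, map_one]

def yK : PowerSeries K := mapT ybr
def CuK : PowerSeries K := PowerSeries.C uu
def CvK : PowerSeries K := PowerSeries.C vv

lemma hU : mapUT U = CuK := by
  rw [mapUT, U, PowerSeries.map_C, CuK]
  congr 1
  exact HahnSeries.ofPowerSeries_X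

lemma hyU : mapUT yU = yK := mapUT_liftT ybr

lemma hCc : Cc = 1 - X * (CuK ^ 2 + (1 + yK) * CuK + (1 + yK + yK ^ 2)) := by
  rw [Cc, Chat]
  simp only [map_sub, map_mul, map_add, map_pow, map_one, mapUT_X, hU, hyU]

lemma hyK : yK = X * (1 + yK + yK ^ 2 + yK ^ 3) := by
  have h := congrArg mapT ybr_eq
  rw [map_mul, map_add, map_add, map_add, map_one, map_pow, map_pow] at h
  rw [yK]
  convert h using 3
  rw [mapT, PowerSeries.map_X]

lemma huvC : CuK * CvK = 1 := by rw [CuK, CvK, ← map_mul, huv, map_one]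

lemma hSC : PowerSeries.C S = CvK * (1 + CuK + CuK ^ 2 + CuK ^ 3) := by
  have h1 : mapU φu = 1 + uu + uu ^ 2 + uu ^ 3 := by
    rw [φu]
    simp only [map_add, map_one, map_pow, mapU_X]
  rw [S, map_mul, h1, CvK, CuK]
  simp only [map_add, map_one, map_pow]

lemma hI : 1 - PowerSeries.C S * X = (1 - yK * CvK) * Cc := by
  rw [hSC, hCc]
  linear_combination (-(X : PowerSeries K) * (CuK ^ 2 + CuK + 1 + yK * CuK + yK + yK ^ 2)) * huvC
    + CvK * hyK

def gg : PowerSeries K := yK * CvK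
def Z : PowerSeries K := PowerSeries.mk fun n => coeff n (∑ k ∈ Finset.range (n + 1), gg ^ k)

lemma coeff_gg_pow (n k : ℕ) :
    coeff n (gg ^ k) = HahnSeries.single (-(k : ℤ)) (coeff n (ybr ^ k)) := by
  have hyk : yK ^ k = mapT (ybr ^ k) := by rw [yK, ← map_pow]
  have hvk : CvK ^ k = PowerSeries.C (vv ^ k) := by rw [CvK, ← map_pow]
  rw [gg, mul_pow, hyk, hvk, coeff_mul_C, mapT, PowerSeries.coeff_map]
  have h1 : (vv : K) ^ k = HahnSeries.single (-(k : ℤ)) 1 := by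
    rw [vv, HahnSeries.single_pow]; norm_num
  rw [h1]
  show HahnSeries.C ((coeff n) (ybr ^ k)) * _ = _
  rw [HahnSeries.C_apply, HahnSeries.single_mul_single, zero_add, mul_one]

lemma hg_ord {n k : ℕ} (h : n < k) : coeff n (gg ^ k) = 0 := by
  rw [coeff_gg_pow]
  have : coeff n (ybr ^ k) = 0 := by
    have hdvd : (X : PowerSeries ℤ) ^ k ∣ ybr ^ k :=
      pow_dvd_pow_of_dvd ⟨1 + ybr + ybr ^ 2 + ybr ^ 3, ybr_eq⟩ k
    rw [X_pow_dvd_iff] at hdvd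
    exact hdvd n h
  rw [this, HahnSeries.single_eq_zero]

lemma coeff_Z (n N : ℕ) (h : n ≤ N) :
    coeff n Z = coeff n (∑ k ∈ Finset.range (N + 1), gg ^ k) := by
  rw [Z, coeff_mk, map_sum, map_sum]
  refine Finset.sum_subset (Finset.range_subset_range.mpr (by omega)) fun k _ hk => ?_
  exact hg_ord (by simp only [Finset.mem_range, not_lt] at hk; omega)

lemma hZ : (1 - gg) * Z = 1 := by
  ext n
  rw [PowerSeries.coeff_mul]
  have step : ∀ p ∈ Finset.HasAntidiagonal.antidiagonal n,
      coeff p.1 (1 - gg) * coeff p.2 Z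
        = coeff p.1 (1 - gg) * coeff p.2 (∑ k ∈ Finset.range (n + 1), gg ^ k) := by
    intro p hp
    rw [Finset.HasAntidiagonal.mem_antidiagonal] at hp
    rw [coeff_Z p.2 n (by omega)]
  rw [Finset.sum_congr rfl step, ← PowerSeries.coeff_mul]
  have hgeom : (1 - gg) * (∑ k ∈ Finset.range (n + 1), gg ^ k) = 1 - gg ^ (n + 1) := by
    linear_combination (-1 : PowerSeries K) * geom_sum_mul gg (n + 1)
  rw [hgeom, map_sub, hg_ord (Nat.lt_succ_self n), sub_zero]

lemma CT_Z : CT Z = 1 := by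
  ext n
  rw [CT, coeff_mk, coeff_Z n n le_rfl, map_sum]
  have step : ∀ k ∈ Finset.range (n + 1),
      (coeff n (gg ^ k)).coeff 0 = if k = 0 then coeff n (ybr ^ k) else 0 := by
    intro k _
    rw [coeff_gg_pow, HahnSeries.coeff_single]
    split_ifs with h1 h2 h2 <;> first | rfl | omega
  rw [← HahnSeries.coeff.addMonoidHom_apply, map_sum]
  simp only [HahnSeries.coeff.addMonoidHom_apply]
  rw [Finset.sum_congr rfl step, Finset.sum_ite_eq' (Finset.range (n + 1)) 0
    fun k => coeff n (ybr ^ k)]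
  simp

lemma mapT_X : mapT X = X := PowerSeries.map_X ι

lemma CT_U_mul (q : PowerSeries (PowerSeries ℤ)) : CT (mapUT (U * q)) = 0 := by
  ext n
  rw [CT, coeff_mk, mapUT, PowerSeries.coeff_map]
  have h1 : coeff n (U * q) = X * coeff n q := by
    rw [U, coeff_C_mul]
  rw [h1]
  have h2 : (0 : ℤ) = ((0 : ℕ) : ℤ) := by norm_num
  rw [mapU, h2, HahnSeries.ofPowerSeries_apply_coeff]
  simp [PowerSeries.coeff_zero_eq_constantCoeff]

lemma hCcW : Cc * W = Z := by
  have hZ' : (1 - yK * CvK) * Z = 1 := hZ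
  linear_combination Z * hW + (-(Z * W)) * hI + (-(Cc * W)) * hZ'

lemma hCuW : (CuK - yK) * W = CuK * Vv := by
  linear_combination (CuK * Vv) * hW + (-(CuK * W * Vv)) * hI + (yK * W * Cc * Vv) * huvC
    + (-((CuK - yK) * W)) * hCV

lemma hB : B * (1 - X * (1 + 2 * ybr + 3 * ybr ^ 2)) = 1 := by
  have e0 : mapT (1 - X * (1 + 2 * ybr + 3 * ybr ^ 2))
      = 1 - X * (1 + 2 * yK + 3 * yK ^ 2) := by
    simp only [map_sub, map_mul, map_add, map_pow, map_one, map_ofNat, mapT_X, yK]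
  have e1 : mapT (1 - X * (1 + 2 * ybr + 3 * ybr ^ 2))
      = Cc + X * (CuK - yK) * (CuK + 1 + 2 * yK) := by
    rw [e0, hCc]; ring
  have e2 : mapUT (U * (X * ((U + 1 + 2 * yU) * Vhat)))
      = CuK * (X * ((CuK + 1 + 2 * yK) * Vv)) := by
    simp only [map_mul, map_add, map_ofNat, map_one, mapUT_X, hU, hyU]
    rfl
  have hsplit : mapT (1 - X * (1 + 2 * ybr + 3 * ybr ^ 2)) * W
      = Z + mapUT (U * (X * ((U + 1 + 2 * yU) * Vhat))) := by
    linear_combination W * e1 + hCcW + (X * (CuK + 1 + 2 * yK)) * hCuW - e2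
  have final := CT_mapT_mul (1 - X * (1 + 2 * ybr + 3 * ybr ^ 2)) W
  rw [hsplit, CT_add, CT_Z, CT_W, CT_U_mul] at final
  linear_combination -final

end


lemma bridgeGF_eq_B : bridgeGF = B := by
  ext n
  rw [bridgeGF, coeff_mk, B, coeff_mk]
  rw [card_lists n, ← coeff_pow_eq_card n n]
  have hφ : φu = ((1 + Polynomial.X + Polynomial.X ^ 2 + Polynomial.X ^ 3 : Polynomial ℤ) :
      PowerSeries ℤ) := by
    simp [φu, Polynomial.coe_add, Polynomial.coe_one, Polynomial.coe_pow, Polynomial.coe_X]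
  rw [hφ, ← Polynomial.coe_pow, Polynomial.coeff_coe]

end BridgeAux

theorem bridge_minimalPolynomial :
    (16 * X ^ 3 + 8 * X ^ 2 + 11 * X - 4) * bridgeGF ^ 3
      + (3 - 2 * X) * bridgeGF + 1 = 0 := by
  rw [BridgeAux.bridgeGF_eq_B]
  have h1 := BridgeAux.hB
  have h2 := BridgeAux.ybr_eq
  set B := BridgeAux.B with hBdef
  set y := BridgeAux.ybr with hydef
  linear_combination
    (-1 - 4*B - 4*B^2 + 3*X*B + 7*X*B^2 + 2*X*y*B + 10*X*y*B^2 + 3*X*y^2*B + 15*X*y^2*B^2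
      - 3*X^2*B^2 - 8*X^2*y*B^2 - 16*X^2*y^2*B^2 - 12*X^2*y^3*B^2 - 9*X^2*y^4*B^2) * h1
    + (B^3 * (-18*X - 27*X*y - 13*X^2 + 27*X^2*y + 27*X^2*y^2 + 27*X^2*y^3)) * h2
end

section
/- Let k ≥ 1 be an integer and let f(t) ∈ ℤ⟦t⟧ be the power series whose coefficient of t^n is the number of lists of n integers, each equal to 1 or −k, all of whose prefix sums are ≥ 0 and whose total sum is 0. Then f = 1 + t^{k+1}·f^{k+1} in ℤ⟦t⟧. -/
open PowerSeries

/-- The generating function for nonnegative excursions with step set `{1, -k}`: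
the coefficient of `t^n` is the number of lists of `n` integers, each equal to
`1` or `-k`, all of whose prefix sums are `≥ 0`, with total sum `0`. -/
noncomputable def fussGF (k : ℕ) : PowerSeries ℤ :=
  PowerSeries.mk fun n =>
    (Nat.card {l : List ℤ //
      l.length = n ∧
      (∀ x ∈ l, x = 1 ∨ x = -(k : ℤ)) ∧
      (∀ i : ℕ, 0 ≤ (l.take i).sum) ∧
      l.sum = 0} : ℤ)

namespace FussAux

/-- The subtype of paths of length `n` with steps in `{1, -k}`, nonnegative
prefix sums, and total sum `j`. -/
def MT (k : ℕ) (j : ℤ) (n : ℕ) : Type :=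
  {l : List ℤ //
    l.length = n ∧
    (∀ x ∈ l, x = 1 ∨ x = -(k : ℤ)) ∧
    (∀ i : ℕ, 0 ≤ (l.take i).sum) ∧
    l.sum = j}

noncomputable def mCount (k : ℕ) (j : ℤ) (n : ℕ) : ℕ := Nat.card (MT k j n)

noncomputable def mGF (k : ℕ) (j : ℤ) : PowerSeries ℤ :=
  PowerSeries.mk fun n => (mCount k j n : ℤ)

lemma fussGF_eq (k : ℕ) : fussGF k = mGF k 0 := rfl

lemma finite_aux (k n : ℕ) :
    {l : List ℤ | l.length = n ∧ ∀ x ∈ l, x = 1 ∨ x = -(k : ℤ)}.Finite := by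
  induction n with
  | zero =>
    refine Set.Finite.subset (Set.finite_singleton ([] : List ℤ)) ?_
    rintro l ⟨h, -⟩
    simpa [List.length_eq_zero_iff] using h
  | succ n ih =>
    refine Set.Finite.subset
      (Set.Finite.image2 List.cons
        ((Set.finite_singleton (1 : ℤ)).insert (-(k : ℤ))) ih) ?_
    rintro l ⟨hlen, hstep⟩
    cases l with
    | nil => simp at hlen
    | cons x t =>
      refine ⟨x, ?_, t, ⟨by simpa using hlen, fun y hy => hstep y (List.mem_cons_of_mem _ hy)⟩, rfl⟩
      rcases hstep x (List.mem_cons_self) with h | h <;>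
        simp [h, Set.mem_insert_iff]

instance finiteMT (k : ℕ) (j : ℤ) (n : ℕ) : Finite (MT k j n) := by
  have : {l : List ℤ | l.length = n ∧ (∀ x ∈ l, x = 1 ∨ x = -(k : ℤ)) ∧
      (∀ i : ℕ, 0 ≤ (l.take i).sum) ∧ l.sum = j}.Finite :=
    Set.Finite.subset (finite_aux k n) (fun l h => ⟨h.1, h.2.1⟩)
  exact this.to_subtype

noncomputable instance (k : ℕ) (j : ℤ) (n : ℕ) : Fintype (MT k j n) :=
  Fintype.ofFinite _

/-- The sigma type of a pair of paths with given total length. -/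
def ST (k : ℕ) (j₁ j₂ : ℤ) (N : ℕ) : Type :=
  (pq : Finset.HasAntidiagonal.antidiagonal N) × (MT k j₁ (pq.1.1) × MT k j₂ (pq.1.2))

noncomputable instance (k : ℕ) (j₁ j₂ : ℤ) (N : ℕ) : Fintype (ST k j₁ j₂ N) := by
  unfold ST; infer_instance

lemma card_ST (k : ℕ) (j₁ j₂ : ℤ) (N : ℕ) :
    Nat.card (ST k j₁ j₂ N) =
      ∑ pq ∈ Finset.HasAntidiagonal.antidiagonal N, mCount k j₁ pq.1 * mCount k j₂ pq.2 := by
  rw [Nat.card_eq_fintype_card]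
  unfold ST
  rw [Fintype.card_sigma]
  rw [← Finset.sum_coe_sort (Finset.HasAntidiagonal.antidiagonal N)
    (fun pq => mCount k j₁ pq.1 * mCount k j₂ pq.2)]
  refine Finset.sum_congr rfl fun pq _ => ?_
  rw [Fintype.card_prod, mCount, mCount, Nat.card_eq_fintype_card, Nat.card_eq_fintype_card]

end FussAux
namespace FussAux

lemma sum_take_append (xs ys : List ℤ) (t : ℕ) :
    ((xs ++ ys).take t).sum = (xs.take t).sum + ((ys.take (t - xs.length)).sum) := by
  rw [List.take_append, List.sum_append]

lemma sum_take_add (l : List ℤ) (a b : ℕ) :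
    (l.take (a + b)).sum = (l.take a).sum + ((l.drop a).take b).sum := by
  rw [List.take_add, List.sum_append]

lemma sum_take_succ (l : List ℤ) (i : ℕ) (h : i < l.length) :
    (l.take (i + 1)).sum = (l.take i).sum + l[i] := by
  have h1 : (l[i] :: l.drop (i + 1)).take 1 = [l[i]] := rfl
  rw [sum_take_add, List.drop_eq_getElem_cons h, h1, List.sum_cons,
    List.sum_nil, add_zero]

/-- The gluing map for the decomposition `M_{j+1} = X * (M_0 * M_j)`. -/
def glue2 (k : ℕ) (j : ℤ) (N : ℕ) : ST k 0 j N → MT k (j + 1) (N + 1) :=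
  fun ⟨⟨⟨p, q⟩, hpq⟩, ⟨E, hE⟩, ⟨c, hc⟩⟩ =>
    ⟨E ++ 1 :: c, by
      obtain ⟨hEl, hEs, hEn, hE0⟩ := hE
      obtain ⟨hcl, hcs, hcn, hcj⟩ := hc
      have hpq' : p + q = N := Finset.HasAntidiagonal.mem_antidiagonal.1 hpq
      refine ⟨by simp [hEl, hcl]; omega, ?_, ?_, ?_⟩
      · intro x hx
        rcases List.mem_append.1 hx with h | h
        · exact hEs x h
        · rcases List.mem_cons.1 h with h | h
          · exact Or.inl h
          · exact hcs x h
      · intro t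
        rw [sum_take_append]
        cases h : t - E.length with
        | zero => simpa using hEn t
        | succ s =>
          rw [List.take_succ_cons, List.sum_cons]
          have h1 := hEn t
          have h2 := hcn s
          omega
      · rw [List.sum_append, List.sum_cons, hE0, hcj]; ring⟩

lemma split2_len_lt {E E' c c' : List ℤ} (hE0 : E.sum = 0) (hE'0 : E'.sum = 0)
    (hcn : ∀ i, 0 ≤ (c.take i).sum)
    (h : E ++ 1 :: c = E' ++ 1 :: c') (hlt : E.length < E'.length) : False := by
  have hs := congrArg (fun l : List ℤ => (l.take E'.length).sum) h
  rw [sum_take_append, sum_take_append, Nat.sub_self, List.take_length,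
    List.take_zero, List.sum_nil, hE'0] at hs
  obtain ⟨s, hsx⟩ : ∃ s, E'.length - E.length = s + 1 :=
    ⟨E'.length - E.length - 1, by omega⟩
  rw [hsx, List.take_succ_cons, List.sum_cons,
    List.take_of_length_le hlt.le] at hs
  have h1 := hcn s
  rw [hE0] at hs
  omega

lemma glue2_injective (k : ℕ) (j : ℤ) (N : ℕ) :
    Function.Injective (glue2 k j N) := by
  rintro ⟨⟨⟨p, q⟩, hpq⟩, ⟨E, hE⟩, ⟨c, hc⟩⟩ ⟨⟨⟨p', q'⟩, hpq'⟩, ⟨E', hE'⟩, ⟨c', hc'⟩⟩ hxy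
  have hl : E ++ 1 :: c = E' ++ 1 :: c' := congrArg Subtype.val hxy
  have hlen : E.length = E'.length := by
    by_contra hne
    rcases lt_or_gt_of_ne hne with hlt | hgt
    · exact split2_len_lt hE.2.2.2 hE'.2.2.2 hc.2.2.1 hl hlt
    · exact split2_len_lt hE'.2.2.2 hE.2.2.2 hc'.2.2.1 hl.symm hgt
  obtain ⟨rfl, h2⟩ := List.append_inj hl hlen
  obtain rfl : c = c' := by injection h2
  have e1 : E.length = p := hE.1
  have e2 : E.length = p' := hE'.1
  have e3 : p + q = N := by simpa [Finset.HasAntidiagonal.mem_antidiagonal] using hpq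
  have e4 : p' + q' = N := by simpa [Finset.HasAntidiagonal.mem_antidiagonal] using hpq'
  obtain rfl : p = p' := by omega
  obtain rfl : q = q' := by omega
  rfl

lemma glue2_surjective (k : ℕ) (j : ℤ) (hj : 0 ≤ j) (N : ℕ) :
    Function.Surjective (glue2 k j N) := by
  classical
  rintro ⟨l, hl, hs, hn, hsum⟩
  set i := Nat.findGreatest (fun t => (l.take t).sum = 0) N with hidef
  have hPi : (l.take i).sum = 0 :=
    Nat.findGreatest_spec (P := fun t => (l.take t).sum = 0)
      (Nat.zero_le N) (by simp)
  have hiN : i ≤ N := Nat.findGreatest_le N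
  have hge1 : ∀ t, i < t → 1 ≤ (l.take t).sum := by
    intro t ht
    rcases le_or_gt t N with h | h
    · have h1 : (l.take t).sum ≠ 0 := Nat.findGreatest_is_greatest ht h
      have h2 := hn t
      omega
    · rw [List.take_of_length_le (by omega), hsum]
      omega
  have hilt : i < l.length := by omega
  have hsucc := sum_take_succ l i hilt
  have hget1 : l[i] = 1 := by
    rcases hs l[i] (List.getElem_mem hilt) with h | h
    · exact h
    · exfalso
      have h1 := hge1 (i + 1) (Nat.lt_succ_self i)
      have h2 : (0 : ℤ) ≤ (k : ℤ) := Int.natCast_nonneg k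
      omega
  have hs1 : (l.take (i + 1)).sum = 1 := by omega
  refine ⟨⟨⟨⟨i, N - i⟩, Finset.HasAntidiagonal.mem_antidiagonal.2 (by omega)⟩,
    ⟨l.take i, ?_, fun x hx => hs x (List.mem_of_mem_take hx), ?_, hPi⟩,
    ⟨l.drop (i + 1), ?_, fun x hx => hs x (List.mem_of_mem_drop hx), ?_, ?_⟩⟩, ?_⟩
  · show (l.take i).length = i
    rw [List.length_take, hl]; omega
  · intro t; rw [List.take_take]; exact hn _
  · show (l.drop (i + 1)).length = N - i
    rw [List.length_drop, hl]; omega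
  · intro t
    have h1 := sum_take_add l (i + 1) t
    have h2 := hge1 (i + 1 + t) (by omega)
    omega
  · have h1 := List.sum_take_add_sum_drop l (i + 1)
    omega
  · apply Subtype.ext
    show l.take i ++ 1 :: l.drop (i + 1) = l
    conv_rhs => rw [← List.take_append_drop i l, List.drop_eq_getElem_cons hilt, hget1]

lemma count2 (k : ℕ) (j : ℤ) (hj : 0 ≤ j) (N : ℕ) :
    mCount k (j + 1) (N + 1) =
      ∑ pq ∈ Finset.HasAntidiagonal.antidiagonal N, mCount k 0 pq.1 * mCount k j pq.2 := by
  rw [← card_ST, mCount]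
  exact (Nat.card_eq_of_bijective (glue2 k j N)
    ⟨glue2_injective k j N, glue2_surjective k j hj N⟩).symm

end FussAux
namespace FussAux

lemma sum_take_cons (x : ℤ) (l : List ℤ) (t : ℕ) :
    ((x :: l).take (t + 1)).sum = x + (l.take t).sum := by
  rw [List.take_succ_cons, List.sum_cons]

/-- The gluing map for the arch decomposition. -/
def glue1 (a N : ℕ) : ST (a + 1) (a : ℤ) 0 N → MT (a + 1) 0 (N + 2) :=
  fun ⟨⟨⟨p, q⟩, hpq⟩, ⟨c, hc⟩, ⟨e, he⟩⟩ =>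
    ⟨1 :: (c ++ (-((a + 1 : ℕ) : ℤ)) :: e), by
      obtain ⟨hcl, hcs, hcn, hca⟩ := hc
      obtain ⟨hel, hes, hen, he0⟩ := he
      have hpq' : p + q = N := by simpa [Finset.HasAntidiagonal.mem_antidiagonal] using hpq
      refine ⟨by simp [hcl, hel]; omega, ?_, ?_, ?_⟩
      · intro x hx
        rcases List.mem_cons.1 hx with h | h
        · exact Or.inl h
        · rcases List.mem_append.1 h with h | h
          · exact hcs x h
          · rcases List.mem_cons.1 h with h | h
            · exact Or.inr h
            · exact hes x h
      · intro t
        cases t with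
        | zero => simp
        | succ s =>
          rw [sum_take_cons, sum_take_append]
          cases h : s - c.length with
          | zero =>
            have h1 := hcn s
            simp only [List.take_zero, List.sum_nil, add_zero]
            omega
          | succ u =>
            rw [sum_take_cons, List.take_of_length_le (by omega), hca]
            have h1 := hen u
            push_cast
            omega
      · rw [List.sum_cons, List.sum_append, List.sum_cons, hca, he0]
        push_cast
        ring⟩

lemma split1_len_lt {A : ℤ} {c c' e e' : List ℤ} (hcA : 1 + (c.sum + A) = 0)
    (hc'n : ∀ i, 0 ≤ (c'.take i).sum)
    (h : (1 : ℤ) :: (c ++ A :: e) = 1 :: (c' ++ A :: e'))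
    (hlt : c.length < c'.length) : False := by
  have hs := congrArg (fun l : List ℤ => (l.take (c.length + 2)).sum) h
  have h2 : c.length + 2 = c.length + 1 + 1 := rfl
  rw [h2, sum_take_cons, sum_take_cons, sum_take_append, sum_take_append,
    show c.length + 1 - c.length = 0 + 1 from by omega,
    show c.length + 1 - c'.length = 0 from by omega,
    sum_take_cons, List.take_zero, List.take_zero, List.sum_nil,
    List.take_of_length_le (show c.length ≤ c.length + 1 from by omega)] at hs
  have h3 := hc'n (c.length + 1)
  omega

lemma glue1_injective (a N : ℕ) : Function.Injective (glue1 a N) := by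
  rintro ⟨⟨⟨p, q⟩, hpq⟩, ⟨c, hc⟩, ⟨e, he⟩⟩ ⟨⟨⟨p', q'⟩, hpq'⟩, ⟨c', hc'⟩, ⟨e', he'⟩⟩ hxy
  have hl : (1 : ℤ) :: (c ++ (-((a + 1 : ℕ) : ℤ)) :: e)
      = 1 :: (c' ++ (-((a + 1 : ℕ) : ℤ)) :: e') := congrArg Subtype.val hxy
  have hsum : 1 + (c.sum + -((a + 1 : ℕ) : ℤ)) = 0 := by
    rw [hc.2.2.2]; push_cast; ring
  have hsum' : 1 + (c'.sum + -((a + 1 : ℕ) : ℤ)) = 0 := by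
    rw [hc'.2.2.2]; push_cast; ring
  have hlen : c.length = c'.length := by
    by_contra hne
    rcases lt_or_gt_of_ne hne with hlt | hgt
    · exact split1_len_lt hsum hc'.2.2.1 hl hlt
    · exact split1_len_lt hsum' hc.2.2.1 hl.symm hgt
  have hl2 : c ++ (-((a + 1 : ℕ) : ℤ)) :: e = c' ++ (-((a + 1 : ℕ) : ℤ)) :: e' := by
    injection hl
  obtain ⟨rfl, h2⟩ := List.append_inj hl2 hlen
  obtain rfl : e = e' := by injection h2
  have e1 : c.length = p := hc.1
  have e2 : c.length = p' := hc'.1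
  have e3 : p + q = N := by simpa [Finset.HasAntidiagonal.mem_antidiagonal] using hpq
  have e4 : p' + q' = N := by simpa [Finset.HasAntidiagonal.mem_antidiagonal] using hpq'
  obtain rfl : p = p' := by omega
  obtain rfl : q = q' := by omega
  rfl

lemma glue1_surjective (a N : ℕ) : Function.Surjective (glue1 a N) := by
  classical
  rintro ⟨l, hl, hs, hn, hsum⟩
  have hex : ∃ t, 0 < t ∧ (l.take t).sum = 0 :=
    ⟨N + 2, by omega, by rw [List.take_of_length_le (by omega), hsum]⟩
  set i := Nat.find hex with hidef
  obtain ⟨hi0, hiPsum⟩ : 0 < i ∧ (l.take i).sum = 0 := Nat.find_spec hex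
  have hile : i ≤ N + 2 := Nat.find_min' hex
    ⟨by omega, by rw [List.take_of_length_le (by omega), hsum]⟩
  have hpos : ∀ t, 0 < t → t < i → 1 ≤ (l.take t).sum := by
    intro t ht hti
    have h1 := Nat.find_min hex hti
    have h2 := hn t
    simp only [not_and] at h1
    have := h1 ht
    omega
  -- head of l
  obtain ⟨y, hy⟩ : ∃ y, l.drop 0 = y :: l.drop (0 + 1) :=
    ⟨_, List.drop_eq_getElem_cons (by omega)⟩
  rw [List.drop_zero, show (0 : ℕ) + 1 = 1 from rfl] at hy
  have hty : (l.take 1).sum = y := by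
    conv_lhs => rw [hy]
    simp
  have hymem : y = 1 ∨ y = -((a + 1 : ℕ) : ℤ) :=
    hs y (by rw [hy]; exact List.mem_cons_self)
  -- i ≥ 2
  have hi2 : 2 ≤ i := by
    by_contra h
    have hi1 : i = 1 := by omega
    rw [hi1, hty] at hiPsum
    rcases hymem with h' | h' <;> rw [h'] at hiPsum <;> omega
  have hy1 : y = 1 := by
    have h1 := hpos 1 (by omega) (by omega)
    rw [hty] at h1
    rcases hymem with h | h
    · exact h
    · exfalso; rw [h] at h1; omega
  -- the step at position i - 1
  obtain ⟨x, hx⟩ : ∃ x, l.drop (i - 1) = x :: l.drop (i - 1 + 1) :=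
    ⟨_, List.drop_eq_getElem_cons (by omega)⟩
  rw [show i - 1 + 1 = i from by omega] at hx
  have htx : (l.take i).sum = (l.take (i - 1)).sum + x := by
    have h1 := sum_take_add l (i - 1) 1
    rw [show i - 1 + 1 = i from by omega, hx] at h1
    simpa using h1
  have hxmem : x = 1 ∨ x = -((a + 1 : ℕ) : ℤ) :=
    hs x (List.mem_of_mem_drop (by rw [hx]; exact List.mem_cons_self))
  have him1 := hpos (i - 1) (by omega) (by omega)
  have hx1 : x = -((a + 1 : ℕ) : ℤ) := by
    rcases hxmem with h | h
    · exfalso; rw [h] at htx; omega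
    · exact h
  have hsm1 : (l.take (i - 1)).sum = ((a : ℤ) + 1) := by
    rw [hx1] at htx
    push_cast at htx ⊢
    omega
  -- the components
  have ht1 : (l.take 1).sum = 1 := by rw [hty, hy1]
  refine ⟨⟨⟨⟨i - 2, N + 2 - i⟩, Finset.HasAntidiagonal.mem_antidiagonal.2 (by omega)⟩,
    ⟨(l.drop 1).take (i - 2), ?_,
      fun z hz => hs z (List.mem_of_mem_drop (List.mem_of_mem_take hz)), ?_, ?_⟩,
    ⟨l.drop i, ?_, fun z hz => hs z (List.mem_of_mem_drop hz), ?_, ?_⟩⟩, ?_⟩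
  · show ((l.drop 1).take (i - 2)).length = i - 2
    rw [List.length_take, List.length_drop, hl]; omega
  · intro t
    rw [List.take_take]
    have h1 := sum_take_add l 1 (min t (i - 2))
    have h2 := hpos (1 + min t (i - 2)) (by omega) (by omega)
    omega
  · have h1 := sum_take_add l 1 (i - 2)
    rw [show 1 + (i - 2) = i - 1 from by omega] at h1
    omega
  · show (l.drop i).length = N + 2 - i
    rw [List.length_drop, hl]
  · intro t
    have h1 := sum_take_add l i t
    have h2 := hn (i + t)
    omega
  · have h1 := List.sum_take_add_sum_drop l i
    omega
  · apply Subtype.ext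
    show (1 : ℤ) :: ((l.drop 1).take (i - 2) ++ (-((a + 1 : ℕ) : ℤ)) :: l.drop i) = l
    have hd : (l.drop 1).take (i - 2) ++ (-((a + 1 : ℕ) : ℤ)) :: l.drop i = l.drop 1 := by
      conv_rhs => rw [← List.take_append_drop (i - 2) (l.drop 1)]
      rw [List.drop_drop, show 1 + (i - 2) = i - 1 from by omega, hx, hx1]
    rw [hd, ← hy1, ← hy]

lemma count1 (a N : ℕ) :
    mCount (a + 1) 0 (N + 2) =
      ∑ pq ∈ Finset.HasAntidiagonal.antidiagonal N, mCount (a + 1) (a : ℤ) pq.1 * mCount (a + 1) 0 pq.2 := by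
  rw [← card_ST, mCount]
  exact (Nat.card_eq_of_bijective (glue1 a N)
    ⟨glue1_injective a N, glue1_surjective a N⟩).symm

end FussAux
namespace FussAux

lemma mCount_len_zero (k : ℕ) (j : ℤ) (hj : j ≠ 0) : mCount k j 0 = 0 := by
  have : IsEmpty (MT k j 0) := by
    constructor
    rintro ⟨l, h1, -, -, h4⟩
    rw [List.length_eq_zero_iff.1 h1] at h4
    exact hj (by simpa using h4.symm)
  exact Nat.card_of_isEmpty

lemma mCount_zero_zero (k : ℕ) : mCount k 0 0 = 1 := by
  rw [mCount, Nat.card_eq_one_iff_unique]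
  constructor
  · constructor
    rintro ⟨l, h1, -⟩ ⟨l', h1', -⟩
    apply Subtype.ext
    show l = l'
    rw [List.length_eq_zero_iff.1 h1, List.length_eq_zero_iff.1 h1']
  · exact ⟨⟨[], rfl, by simp, fun i => by simp, rfl⟩⟩

lemma mCount_zero_one (a : ℕ) : mCount (a + 1) 0 1 = 0 := by
  have : IsEmpty (MT (a + 1) 0 1) := by
    constructor
    rintro ⟨l, h1, h2, -, h4⟩
    obtain ⟨x, rfl⟩ := List.length_eq_one_iff.1 h1
    simp only [List.sum_cons, List.sum_nil, add_zero] at h4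
    rcases h2 x (List.mem_cons_self) with h | h <;> rw [h4] at h <;> omega
  exact Nat.card_of_isEmpty

lemma mGF_succ (k : ℕ) (j : ℕ) : mGF k ((j : ℤ) + 1) = X * (mGF k 0 * mGF k (j : ℤ)) := by
  ext n
  cases n with
  | zero =>
    rw [mGF, PowerSeries.coeff_mk, mCount_len_zero k _ (by omega)]
    simp [PowerSeries.coeff_zero_eq_constantCoeff, map_mul]
  | succ N =>
    rw [PowerSeries.coeff_succ_X_mul]
    simp only [mGF, PowerSeries.coeff_mk, PowerSeries.coeff_mul]
    rw [count2 k (j : ℤ) (Int.natCast_nonneg j) N]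
    push_cast
    rfl

lemma mGF_main (a : ℕ) :
    mGF (a + 1) 0 = 1 + X ^ 2 * (mGF (a + 1) (a : ℤ) * mGF (a + 1) 0) := by
  ext n
  rw [map_add, PowerSeries.coeff_one, PowerSeries.coeff_X_pow_mul']
  match n with
  | 0 =>
    rw [mGF, PowerSeries.coeff_mk, mCount_zero_zero]
    norm_num
  | 1 =>
    rw [mGF, PowerSeries.coeff_mk, mCount_zero_one]
    norm_num
  | (N + 2) =>
    rw [if_neg (by omega), if_pos (by omega), zero_add,
      show N + 2 - 2 = N from by omega]
    simp only [mGF, PowerSeries.coeff_mk, PowerSeries.coeff_mul]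
    rw [count1 a N]
    push_cast
    rfl

lemma mGF_pow (k : ℕ) : ∀ j : ℕ, mGF k (j : ℤ) = X ^ j * mGF k 0 ^ (j + 1)
  | 0 => by simp
  | (j + 1) => by
    have h := mGF_pow k j
    rw [show ((j + 1 : ℕ) : ℤ) = (j : ℤ) + 1 from by push_cast; ring,
      mGF_succ, h]
    ring

end FussAux

theorem fuss_equation (k : ℕ) (hk : 1 ≤ k) :
    fussGF k = 1 + X ^ (k + 1) * fussGF k ^ (k + 1) := by
  obtain ⟨a, rfl⟩ : ∃ a, k = a + 1 := ⟨k - 1, by omega⟩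
  rw [FussAux.fussGF_eq]
  have h1 := FussAux.mGF_main a
  rw [FussAux.mGF_pow (a + 1) a] at h1
  conv_lhs => rw [h1]
  ring
end

section
/- Let D(n) be the number of lists of 5n integers, each equal to 2 or −3, all of whose prefix sums are ≥ 0 and whose total sum is 0 (the Duchon numbers 1, 2, 23, …), and let f(t) = Σ_{n≥0} D(n) tⁿ ∈ ℤ⟦t⟧. Then 1 − f + 2t·f⁵ − t·f⁶ + t·f⁷ + t²·f¹⁰ = 0 in ℤ⟦t⟧. -/
open PowerSeries

def DOk (m : ℕ) (j : ℤ) (l : List ℤ) : Prop :=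
  l.length = m ∧ (∀ x ∈ l, x = 2 ∨ x = -3) ∧ (∀ i : ℕ, 0 ≤ (l.take i).sum) ∧ l.sum = j

lemma DOk.nonneg {m : ℕ} {j : ℤ} {l : List ℤ} (h : DOk m j l) : 0 ≤ j := by
  have := h.2.2.1 l.length
  rwa [List.take_length, h.2.2.2] at this

instance dokFinite (m : ℕ) (j : ℤ) : Finite {l : List ℤ // DOk m j l} := by
  apply Finite.of_injective
    (f := fun (l : {l : List ℤ // DOk m j l}) (i : Fin m) =>
      decide (l.1[(i : ℕ)]'(by rw [l.2.1]; exact i.isLt) = 2))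
  rintro ⟨l, hl⟩ ⟨l', hl'⟩ heq
  apply Subtype.ext
  apply List.ext_getElem (by rw [hl.1, hl'.1])
  intro i hi hi'
  have hfun := congrFun heq ⟨i, by rwa [← hl.1]⟩
  simp only [decide_eq_decide] at hfun
  rcases hl.2.1 _ (List.getElem_mem hi) with h1 | h1 <;>
    rcases hl'.2.1 _ (List.getElem_mem hi') with h2 | h2 <;>
    simp [h1, h2] at hfun ⊢

lemma dok_dropLast {m : ℕ} {j : ℤ} {l : List ℤ} (h : DOk (m + 1) j l) (hne : l ≠ []) :
    DOk m (j - l.getLast hne) l.dropLast := by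
  obtain ⟨h1, h2, h3, h4⟩ := h
  refine ⟨by simp [h1], fun x hx => h2 x (List.dropLast_subset l hx), ?_, ?_⟩
  · intro i
    rw [List.dropLast_eq_take, List.take_take]
    exact h3 _
  · have h5 : (l.dropLast ++ [l.getLast hne]).sum = j := by
      rw [List.dropLast_append_getLast]; exact h4
    rw [List.sum_append, List.sum_singleton] at h5
    linarith

lemma dok_append {m : ℕ} {j x : ℤ} {l : List ℤ} (h : DOk m j l) (hx : x = 2 ∨ x = -3)
    (hnn : 0 ≤ j + x) : DOk (m + 1) (j + x) (l ++ [x]) := by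
  obtain ⟨h1, h2, h3, h4⟩ := h
  refine ⟨by simp [h1], ?_, ?_, by simp [h4]⟩
  · intro y hy
    rcases List.mem_append.mp hy with hy | hy
    · exact h2 y hy
    · rw [List.mem_singleton] at hy; subst hy; exact hx
  · intro i
    rcases le_or_gt i m with hi | hi
    · rw [List.take_append_of_le_length (by omega)]
      exact h3 i
    · rw [List.take_of_length_le (by simp [h1]; omega)]
      simpa [h4] using hnn

noncomputable def lastEquiv (m : ℕ) (j : ℤ) (hj : 0 ≤ j) :
    {l : List ℤ // DOk (m + 1) j l} ≃
      ({l : List ℤ // DOk m (j - 2) l} ⊕ {l : List ℤ // DOk m (j + 3) l}) where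
  toFun := fun ⟨l, hl⟩ =>
    have hne : l ≠ [] := List.ne_nil_of_length_pos (by rw [hl.1]; omega)
    if hx : l.getLast hne = 2 then
      Sum.inl ⟨l.dropLast, by have := dok_dropLast hl hne; rwa [hx] at this⟩
    else
      Sum.inr ⟨l.dropLast, by
        have hx3 : l.getLast hne = -3 := by
          rcases hl.2.1 _ (List.getLast_mem hne) with h | h
          · exact absurd h hx
          · exact h
        have := dok_dropLast hl hne
        rw [hx3] at this
        have hj3 : j - -3 = j + 3 := by ring
        rwa [hj3] at this⟩
  invFun := fun s =>
    match s with
    | Sum.inl ⟨l, hl⟩ => ⟨l ++ [2], by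
        have := dok_append hl (Or.inl rfl) (by omega)
        have hj2 : j - 2 + 2 = j := by ring
        rwa [hj2] at this⟩
    | Sum.inr ⟨l, hl⟩ => ⟨l ++ [-3], by
        have := dok_append hl (Or.inr rfl) (by omega)
        have hj3 : j + 3 + -3 = j := by ring
        rwa [hj3] at this⟩
  left_inv := fun ⟨l, hl⟩ => by
    have hne : l ≠ [] := List.ne_nil_of_length_pos (by rw [hl.1]; omega)
    apply Subtype.ext
    dsimp only
    split_ifs with hx
    · show l.dropLast ++ [2] = l
      conv_rhs => rw [← List.dropLast_append_getLast hne, hx]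
    · have hx3 : l.getLast hne = -3 := by
        rcases hl.2.1 _ (List.getLast_mem hne) with h | h
        · exact absurd h hx
        · exact h
      show l.dropLast ++ [-3] = l
      conv_rhs => rw [← List.dropLast_append_getLast hne, hx3]
  right_inv := fun s => by
    rcases s with ⟨l, hl⟩ | ⟨l, hl⟩
    · dsimp only
      rw [dif_pos List.getLast_concat]
      simp [List.dropLast_concat]
    · dsimp only
      rw [dif_neg (by rw [List.getLast_concat]; norm_num)]
      simp [List.dropLast_concat]

noncomputable def cnt (m : ℕ) (j : ℤ) : ℕ := Nat.card {l : List ℤ // DOk m j l}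

lemma cnt_succ (m : ℕ) {j : ℤ} (hj : 0 ≤ j) : cnt (m + 1) j = cnt m (j - 2) + cnt m (j + 3) := by
  unfold cnt
  rw [Nat.card_congr (lastEquiv m j hj), Nat.card_sum]

lemma cnt_zero (j : ℤ) : cnt 0 j = if j = 0 then 1 else 0 := by
  unfold cnt
  split_ifs with h
  · subst h
    have : Unique {l : List ℤ // DOk 0 0 l} := by
      refine ⟨⟨⟨[], ⟨rfl, by simp, by simp, rfl⟩⟩⟩, ?_⟩
      rintro ⟨l, hl⟩
      apply Subtype.ext
      exact List.eq_nil_of_length_eq_zero hl.1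
    exact Nat.card_unique
  · have : IsEmpty {l : List ℤ // DOk 0 j l} := by
      refine ⟨fun ⟨l, hl⟩ => h ?_⟩
      have hl0 : l = [] := List.eq_nil_of_length_eq_zero hl.1
      subst hl0
      simpa using hl.2.2.2.symm
    exact Nat.card_of_isEmpty

lemma cnt_of_neg {m : ℕ} {j : ℤ} (hj : j < 0) : cnt m j = 0 := by
  have : IsEmpty {l : List ℤ // DOk m j l} := ⟨fun ⟨_, hl⟩ => absurd hl.nonneg (by omega)⟩
  exact Nat.card_of_isEmpty

noncomputable def Aser (j : ℕ) : PowerSeries ℤ := PowerSeries.mk fun m => (cnt m (j : ℤ) : ℤ)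

lemma Aser_eq (j : ℕ) :
    Aser j = (if j = 0 then 1 else 0) + (if 2 ≤ j then X * Aser (j - 2) else 0) + X * Aser (j + 3) := by
  ext m
  cases m with
  | zero =>
    simp only [map_add, Aser, coeff_mk, coeff_zero_X_mul]
    rw [cnt_zero]
    split_ifs with h1 h2 <;> simp_all
  | succ m =>
    have hj : (0 : ℤ) ≤ (j : ℤ) := Int.ofNat_nonneg j
    simp only [map_add, Aser, coeff_mk, coeff_succ_X_mul]
    rw [cnt_succ m hj]
    have h1 : coeff (m + 1) (if j = 0 then (1 : PowerSeries ℤ) else 0) = 0 := by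
      split_ifs <;> simp [coeff_one]
    rw [h1]
    by_cases h2 : 2 ≤ j
    · rw [if_pos h2]
      have : ((j : ℤ) - 2) = ((j - 2 : ℕ) : ℤ) := by omega
      rw [this]
      simp only [coeff_succ_X_mul, Aser, coeff_mk]
      push_cast
      ring_nf
    · rw [if_neg h2]
      have : cnt m ((j : ℤ) - 2) = 0 := cnt_of_neg (by omega)
      rw [this]
      simp only [map_zero, Aser, coeff_mk]
      push_cast
      ring_nf

noncomputable def Mser : PowerSeries (PowerSeries ℤ) := PowerSeries.mk fun j => Aser j

noncomputable def Kser : PowerSeries (PowerSeries ℤ) :=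
  X ^ 3 - C X - C X * X ^ 5

noncomputable def Wser : PowerSeries (PowerSeries ℤ) :=
  X ^ 3 - C (X * Aser 2) * X ^ 2 - C (X * Aser 1) * X - C (X * Aser 0)

lemma coeff_Mser (j : ℕ) : coeff j Mser = Aser j := coeff_mk j _

lemma hWK : Wser = Kser * Mser := by
  have hK : Kser * Mser = Mser * X ^ 3 - C X * Mser - (C X * Mser) * X ^ 5 := by
    rw [Kser]; ring
  have hW : Wser = X ^ 3 - C (X * Aser 2) * X ^ 2 - C (X * Aser 1) * X ^ 1 - C (X * Aser 0) := by
    rw [Wser]; ring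
  rw [hK, hW]
  ext1 j
  simp only [map_sub, coeff_mul_X_pow', coeff_C_mul, coeff_C, coeff_X_pow, coeff_Mser]
  rcases le_or_gt 6 j with h6 | h6
  · obtain ⟨i, rfl⟩ : ∃ i, j = i + 6 := ⟨j - 6, by omega⟩
    have key := Aser_eq (i + 3)
    rw [if_neg (by omega : ¬ i + 3 = 0), if_pos (by omega : 2 ≤ i + 3)] at key
    have r1 : i + 6 - 3 = i + 3 := by omega
    have r2 : i + 6 - 5 = i + 1 := by omega
    have r3 : i + 3 - 2 = i + 1 := by omega
    have r4 : i + 3 + 3 = i + 6 := by omega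
    rw [r1, r2] ; rw [r3, r4] at key
    split_ifs <;> first
      | contradiction
      | (exfalso; omega)
      | (linear_combination key)
      | (linear_combination -key)
  · have key0 := Aser_eq 0
    have key1 := Aser_eq 1
    have key2 := Aser_eq 2
    norm_num at key0 key1 key2
    interval_cases j <;> norm_num <;> first
      | rfl
      | (linear_combination key0)
      | (linear_combination -key0)
      | (linear_combination key1)
      | (linear_combination -key1)
      | (linear_combination key2)
      | (linear_combination -key2)

lemma constCoeff_A0 : constantCoeff (Aser 0) = 1 := by
  have : constantCoeff (Aser 0) = ((cnt 0 0 : ℤ)) := by simp [Aser, constantCoeff_mk]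
  rw [this, cnt_zero]; norm_num

noncomputable def UA0 : (PowerSeries ℤ)ˣ :=
  Units.mkOfMulEqOne (Aser 0) ((Aser 0).invOfUnit 1)
    (PowerSeries.mul_invOfUnit _ 1 (by rw [constCoeff_A0]; rfl))

lemma coe_UA0 : (UA0 : PowerSeries ℤ) = Aser 0 := rfl

noncomputable def Nser : PowerSeries (PowerSeries ℤ) := Mser.invOfUnit UA0

lemma hMN : Mser * Nser = 1 :=
  PowerSeries.mul_invOfUnit _ _ (by rw [← coeff_zero_eq_constantCoeff, coeff_Mser]; rfl)

lemma hKN : Kser = Wser * Nser := by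
  calc Kser = Kser * (Mser * Nser) := by rw [hMN, mul_one]
  _ = (Kser * Mser) * Nser := by ring
  _ = Wser * Nser := by rw [← hWK]

lemma rel_high (i : ℕ) : coeff (i + 3) Nser =
    X * (Aser 2 * coeff (i + 4) Nser) + X * (Aser 1 * coeff (i + 5) Nser) +
      X * (Aser 0 * coeff (i + 6) Nser) := by
  have h := congrArg (coeff (i + 6)) hKN
  have hWN : Wser * Nser = Nser * X ^ 3 - C (X * Aser 2) * (Nser * X ^ 2)
      - C (X * Aser 1) * (Nser * X ^ 1) - C (X * Aser 0) * Nser := by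
    rw [Wser]; ring
  rw [hWN] at h
  simp only [Kser, map_sub, coeff_X_pow, coeff_C, coeff_mul_X_pow', coeff_C_mul] at h
  rw [if_neg (by omega : ¬ i + 6 = 3), if_neg (by omega : ¬ i + 6 = 0),
    if_pos (by omega : 5 ≤ i + 6), if_neg (by omega : ¬ i + 6 - 5 = 0),
    if_pos (by omega : 3 ≤ i + 6), if_pos (by omega : 2 ≤ i + 6),
    if_pos (by omega : 1 ≤ i + 6)] at h
  have r1 : i + 6 - 3 = i + 3 := by omega
  have r2 : i + 6 - 2 = i + 4 := by omega
  have r3 : i + 6 - 1 = i + 5 := by omega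
  rw [r1, r2, r3] at h
  linear_combination -h

lemma vanish_coeff : ∀ m : ℕ, ∀ i : ℕ, coeff m (coeff (i + 3) Nser) = 0 := by
  intro m
  induction m using Nat.strong_induction_on with
  | _ m ih =>
    intro i
    rw [rel_high i]
    cases m with
    | zero => simp
    | succ m =>
      simp only [map_add, coeff_succ_X_mul]
      rw [coeff_mul, coeff_mul, coeff_mul]
      rw [Finset.sum_eq_zero, Finset.sum_eq_zero, Finset.sum_eq_zero]
      · simp
      · intro p hp
        rw [Finset.HasAntidiagonal.mem_antidiagonal] at hp
        have h0 := ih p.2 (by omega) (i + 3)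
        rw [show i + 3 + 3 = i + 6 from by omega] at h0
        rw [h0, mul_zero]
      · intro p hp
        rw [Finset.HasAntidiagonal.mem_antidiagonal] at hp
        have h0 := ih p.2 (by omega) (i + 2)
        rw [show i + 2 + 3 = i + 5 from by omega] at h0
        rw [h0, mul_zero]
      · intro p hp
        rw [Finset.HasAntidiagonal.mem_antidiagonal] at hp
        have h0 := ih p.2 (by omega) (i + 1)
        rw [show i + 1 + 3 = i + 4 from by omega] at h0
        rw [h0, mul_zero]

lemma vanish (i : ℕ) : coeff (i + 3) Nser = 0 := by
  ext m
  rw [vanish_coeff m i, map_zero]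

lemma Zeq_zero :
    (1 : PowerSeries ℤ) - Aser 0 + 2 * X ^ 5 * Aser 0 ^ 5 - X ^ 5 * Aser 0 ^ 6
      + X ^ 5 * Aser 0 ^ 7 + (X ^ 5) ^ 2 * Aser 0 ^ 10 = 0 := by
  have hWN : Wser * Nser = Nser * X ^ 3 - C (X * Aser 2) * (Nser * X ^ 2)
      - C (X * Aser 1) * (Nser * X ^ 1) - C (X * Aser 0) * Nser := by
    rw [Wser]; ring
  have hv3 : coeff 3 Nser = 0 := by simpa using vanish 0
  have hv4 : coeff 4 Nser = 0 := by simpa using vanish 1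
  have hv5 : coeff 5 Nser = 0 := by simpa using vanish 2
  have hco : ∀ j : ℕ, coeff j Kser = coeff j (Wser * Nser) := fun j => congrArg _ hKN
  have e0 := hco 0
  have e1 := hco 1
  have e2 := hco 2
  have e3 := hco 3
  have e4 := hco 4
  have e5 := hco 5
  simp only [hWN, Kser, map_sub, coeff_X_pow, coeff_C, coeff_mul_X_pow', coeff_C_mul]
    at e0 e1 e2 e3 e4 e5
  norm_num at e0 e1 e2 e3 e4 e5
  rw [hv3] at e3
  rw [hv4, hv3] at e4
  rw [hv5, hv4, hv3] at e5
  have h2 : -(X * Aser 2) + X * (X * Aser 2) ^ 3 + 2 * X * (X * Aser 2) * (X * Aser 1)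
      + X * (X * Aser 0) = 0 := by
    linear_combination (-1 : PowerSeries ℤ) * e2 - (X * Aser 2) * e3
      - ((X * Aser 1) + (X * Aser 2) ^ 2) * e4
      - ((X * Aser 0) + 2 * (X * Aser 2) * (X * Aser 1) + (X * Aser 2) ^ 3) * e5
  have h1 : -(X * Aser 1) + X * (X * Aser 2) ^ 2 * (X * Aser 1) + X * (X * Aser 1) ^ 2
      + X * (X * Aser 2) * (X * Aser 0) = 0 := by
    linear_combination (-1 : PowerSeries ℤ) * e1 - (X * Aser 1) * e3
      - ((X * Aser 2) * (X * Aser 1) + (X * Aser 0)) * e4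
      - ((X * Aser 2) ^ 2 * (X * Aser 1) + (X * Aser 2) * (X * Aser 0) + (X * Aser 1) ^ 2) * e5
  have h0 : (X * Aser 0) - X * (X * Aser 2) ^ 2 * (X * Aser 0)
      - X * (X * Aser 1) * (X * Aser 0) - X = 0 := by
    linear_combination (-1 : PowerSeries ℤ) * e0 + (X * Aser 0) * e3
      + (X * Aser 2) * (X * Aser 0) * e4
      + ((X * Aser 2) ^ 2 * (X * Aser 0) + (X * Aser 1) * (X * Aser 0)) * e5
  have hXne : (X : PowerSeries ℤ) ≠ 0 := X_ne_zero
  have hP1 : (X * Aser 2) * (X * Aser 1) * (X * Aser 0) - (X * Aser 2) + (X * Aser 0) ^ 2 = 0 := by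
    apply mul_left_cancel₀ hXne
    rw [mul_zero]
    linear_combination (X * Aser 0) * h2 + (X * Aser 2) * h0
  have hP2 : (X * Aser 1) - (X * Aser 2) * (X * Aser 0) ^ 2 = 0 := by
    apply mul_left_cancel₀ hXne
    rw [mul_zero]
    linear_combination (-(X * Aser 0)) * h1 + (-(X * Aser 1)) * h0
  have hP3 : (X * Aser 2) ^ 2 * (X * Aser 0) ^ 3 - (X * Aser 2) + (X * Aser 0) ^ 2 = 0 := by
    linear_combination hP1 - (X * Aser 2) * (X * Aser 0) * hP2
  have hP4 : (X * Aser 0) - X * (X * Aser 2) ^ 2 * (X * Aser 0) - X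
      - X * (X * Aser 2) * (X * Aser 0) ^ 3 = 0 := by
    linear_combination h0 + X * (X * Aser 0) * hP2
  have hP5 : (X * Aser 0) ^ 3 - X * (X * Aser 2) - X * (X * Aser 2) * (X * Aser 0) ^ 5 = 0 := by
    linear_combination (X * Aser 0) ^ 2 * hP4 + X * hP3
  have hA0ne : Aser 0 ≠ 0 := by
    intro h
    have := constCoeff_A0
    rw [h, map_zero] at this
    exact zero_ne_one this
  have hbig : ((X * Aser 0) ^ 2 * X ^ 2) *
      (1 - Aser 0 + 2 * X ^ 5 * Aser 0 ^ 5 - X ^ 5 * Aser 0 ^ 6 + X ^ 5 * Aser 0 ^ 7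
        + (X ^ 5) ^ 2 * Aser 0 ^ 10) = ((X * Aser 0) ^ 2 * X ^ 2) * 0 := by
    rw [mul_zero]
    linear_combination ((X + X * (X * Aser 0) ^ 5) ^ 2) * hP3
      - ((X + X * (X * Aser 0) ^ 5) - 2 * (X * Aser 0) ^ 6
          + (X * Aser 0) ^ 3 * ((X * Aser 0) ^ 3 - X * (X * Aser 2)
            - X * (X * Aser 2) * (X * Aser 0) ^ 5)) * hP5
  exact mul_left_cancel₀
    (mul_ne_zero (pow_ne_zero _ (mul_ne_zero hXne hA0ne)) (pow_ne_zero _ hXne)) hbig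

/-- The ordinary generating function of the Duchon numbers: the coefficient of
`t^n` is the number of lists of `5n` integers, each equal to `2` or `-3`, all of
whose prefix sums are `≥ 0`, with total sum `0`. -/
noncomputable def duchonGF : PowerSeries ℤ :=
  PowerSeries.mk fun n =>
    (Nat.card {l : List ℤ //
      l.length = 5 * n ∧
      (∀ x ∈ l, x = 2 ∨ x = -3) ∧
      (∀ i : ℕ, 0 ≤ (l.take i).sum) ∧
      l.sum = 0} : ℤ)

def emb5 : ℕ × ℕ ↪ ℕ × ℕ :=
  ⟨fun p => (5 * p.1, 5 * p.2), by
    intro p q h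
    simp only [Prod.mk.injEq] at h
    exact Prod.ext (by omega) (by omega)⟩

lemma emb5_apply (p : ℕ × ℕ) : emb5 p = (5 * p.1, 5 * p.2) := rfl

def Shadow (g g' : PowerSeries ℤ) : Prop :=
  ∀ m : ℕ, coeff m g = if 5 ∣ m then coeff (m / 5) g' else 0

lemma shadow_one : Shadow 1 1 := by
  intro m
  rw [coeff_one]
  rcases Nat.eq_zero_or_pos m with rfl | hm
  · norm_num
  · rw [if_neg (by omega)]
    split_ifs with h5
    · rw [coeff_one, if_neg (by omega)]
    · rfl

lemma shadow_add {g g' h h'} (hg : Shadow g g') (hh : Shadow h h') : Shadow (g + h) (g' + h') := by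
  intro m
  rw [map_add, hg m, hh m, map_add]
  split_ifs <;> simp

lemma shadow_sub {g g' h h'} (hg : Shadow g g') (hh : Shadow h h') : Shadow (g - h) (g' - h') := by
  intro m
  rw [map_sub, hg m, hh m, map_sub]
  split_ifs <;> simp

lemma shadow_X5 : Shadow (X ^ 5) X := by
  intro m
  by_cases h5 : 5 ∣ m
  · obtain ⟨k, rfl⟩ := h5
    rw [if_pos ⟨k, rfl⟩, Nat.mul_div_cancel_left k (by norm_num), coeff_X_pow, coeff_X]
    by_cases hk : k = 1
    · subst hk; norm_num
    · rw [if_neg (by omega), if_neg (by omega)]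
  · rw [if_neg h5, coeff_X_pow, if_neg (by omega)]

lemma shadow_mul {g g' h h'} (hg : Shadow g g') (hh : Shadow h h') : Shadow (g * h) (g' * h') := by
  intro m
  rw [coeff_mul]
  by_cases hm : 5 ∣ m
  · obtain ⟨n, rfl⟩ := hm
    rw [if_pos ⟨n, rfl⟩, Nat.mul_div_cancel_left n (by norm_num), coeff_mul]
    have hsub : (Finset.HasAntidiagonal.antidiagonal n).map emb5 ⊆ Finset.HasAntidiagonal.antidiagonal (5 * n) := by
      intro p hp
      rw [Finset.mem_map] at hp
      obtain ⟨q, hq, rfl⟩ := hp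
      rw [Finset.HasAntidiagonal.mem_antidiagonal] at hq ⊢
      simp only [emb5_apply]
      omega
    rw [← Finset.sum_subset hsub ?_, Finset.sum_map]
    · apply Finset.sum_congr rfl
      intro p _
      simp only [emb5_apply]
      rw [hg, hh, if_pos ⟨p.1, rfl⟩, if_pos ⟨p.2, rfl⟩,
        Nat.mul_div_cancel_left p.1 (by norm_num), Nat.mul_div_cancel_left p.2 (by norm_num)]
    · intro p hp hnp
      rw [Finset.HasAntidiagonal.mem_antidiagonal] at hp
      rw [hg, hh]
      by_cases h1 : 5 ∣ p.1
      · exfalso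
        apply hnp
        rw [Finset.mem_map]
        refine ⟨(p.1 / 5, p.2 / 5), ?_, ?_⟩
        · rw [Finset.HasAntidiagonal.mem_antidiagonal]; omega
        · have h2 : 5 ∣ p.2 := by omega
          simp only [emb5_apply]
          exact Prod.ext (by omega) (by omega)
      · rw [if_neg h1, zero_mul]
  · rw [if_neg hm]
    apply Finset.sum_eq_zero
    intro p hp
    rw [Finset.HasAntidiagonal.mem_antidiagonal] at hp
    by_cases h1 : 5 ∣ p.1
    · have h2 : ¬ 5 ∣ p.2 := by omega
      rw [hh, if_neg h2, mul_zero]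
    · rw [hg, if_neg h1, zero_mul]

lemma shadow_pow {g g'} (hg : Shadow g g') : ∀ k : ℕ, Shadow (g ^ k) (g' ^ k)
  | 0 => by simpa using shadow_one
  | (k + 1) => by
      rw [pow_succ, pow_succ]
      exact shadow_mul (shadow_pow hg k) hg

lemma shadow_two : Shadow 2 2 := by
  have := shadow_add shadow_one shadow_one
  norm_num at this
  exact this

lemma sum_count (l : List ℤ) (h : ∀ x ∈ l, x = 2 ∨ x = -3) :
    l.sum = 2 * (l.count 2 : ℤ) - 3 * (l.count (-3) : ℤ) ∧
      l.length = l.count 2 + l.count (-3) := by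
  induction l with
  | nil => simp
  | cons x l ih =>
    have hx := h x List.mem_cons_self
    obtain ⟨ih1, ih2⟩ := ih (fun y hy => h y (List.mem_cons_of_mem _ hy))
    rcases hx with rfl | rfl <;>
      simp only [List.sum_cons, List.count_cons, List.length_cons, ih1, ih2] <;>
      norm_num <;> omega

lemma dok_dvd {m : ℕ} {l : List ℤ} (h : DOk m 0 l) : 5 ∣ m := by
  obtain ⟨h1, h2, _, h4⟩ := h
  obtain ⟨hs, hl⟩ := sum_count l h2
  rw [h4] at hs
  omega

lemma shadow_E : Shadow (Aser 0) duchonGF := by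
  intro m
  have hcast : ((0 : ℕ) : ℤ) = 0 := rfl
  by_cases hm : 5 ∣ m
  · obtain ⟨n, rfl⟩ := hm
    rw [if_pos ⟨n, rfl⟩, Nat.mul_div_cancel_left n (by norm_num)]
    rw [show (coeff (5 * n)) (Aser 0) = ((cnt (5 * n) ((0:ℕ):ℤ) : ℤ)) from coeff_mk _ _]
    rw [duchonGF, coeff_mk]
    rfl
  · rw [if_neg hm]
    rw [show (coeff m) (Aser 0) = ((cnt m ((0:ℕ):ℤ) : ℤ)) from coeff_mk _ _]
    have : IsEmpty {l : List ℤ // DOk m ((0:ℕ):ℤ) l} := ⟨fun ⟨l, hl⟩ => hm (dok_dvd (by rwa [hcast] at hl))⟩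
    rw [cnt, Nat.card_of_isEmpty]
    norm_num

theorem duchon_minimalPolynomial :
    1 - duchonGF + 2 * X * duchonGF ^ 5 - X * duchonGF ^ 6 + X * duchonGF ^ 7
      + X ^ 2 * duchonGF ^ 10 = 0 := by
  have hsh : Shadow
      (1 - Aser 0 + 2 * X ^ 5 * Aser 0 ^ 5 - X ^ 5 * Aser 0 ^ 6 + X ^ 5 * Aser 0 ^ 7
        + (X ^ 5) ^ 2 * Aser 0 ^ 10)
      (1 - duchonGF + 2 * X * duchonGF ^ 5 - X * duchonGF ^ 6 + X * duchonGF ^ 7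
        + X ^ 2 * duchonGF ^ 10) := by
    apply shadow_add
    apply shadow_add
    apply shadow_sub
    apply shadow_add
    · exact shadow_sub shadow_one shadow_E
    · exact shadow_mul (shadow_mul shadow_two shadow_X5) (shadow_pow shadow_E 5)
    · exact shadow_mul shadow_X5 (shadow_pow shadow_E 6)
    · exact shadow_mul shadow_X5 (shadow_pow shadow_E 7)
    · exact shadow_mul (shadow_pow shadow_X5 2) (shadow_pow shadow_E 10)
  ext n
  have h1 := hsh (5 * n)
  rw [Zeq_zero, map_zero, if_pos ⟨n, rfl⟩, Nat.mul_div_cancel_left n (by norm_num)] at h1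
  rw [map_zero]
  exact h1.symm
end
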